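/- arXiv:2007.07816 — 5 statements merged into one kernel-verified Lean document; each statement's English description precedes it below -/
import Mathlib

section
/- Let p be analytic on 𝔻 with p(0) = 1 and let β ≥ 1 be a real number. If the function z ↦ 1 + β·z·p'(z) is subordinate to ℘(z) = 1 + z e^z, then p(z) is subordinate to e^z. -/
open Complex Metric

section AuxLemmas
open Real Set


private lemma mono_add_sin : Monotone (fun x : ℝ => x + Real.sin x) := by
  have h : ∀ x : ℝ, HasDerivAt (fun x : ℝ => x + Real.sin x) (1 + Real.cos x) x :=
    fun x => (hasDerivAt_id x).add (Real.hasDerivAt_sin x)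
  apply monotone_of_deriv_nonneg
  · exact fun x => (h x).differentiableAt
  · intro x
    rw [(h x).deriv]
    nlinarith [Real.neg_one_le_cos x]

private lemma lemR_core {s α θ : ℝ} (hs0 : 0 < s) (hs1 : s < 1)
    (hα0 : 0 < α) (hαπ : α < π) (hθl : -π < θ) (hθu : θ ≤ π)
    (h : θ + Real.sin θ = α + s * Real.sin α) :
    Real.log s + s * Real.cos α < Real.cos θ := by
  have hsinα : 0 < Real.sin α := Real.sin_pos_of_pos_of_lt_pi hα0 hαπ
  have husin : Real.sin α ≤ π - α := by
    have h1 : Real.sin (π - α) = Real.sin α := Real.sin_pi_sub α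
    have h2 := Real.sin_le (by linarith : (0:ℝ) ≤ π - α)
    linarith
  set u : ℝ := α + s * Real.sin α with hu
  have hu0 : 0 < u := by nlinarith
  have huπ : u < π := by nlinarith
  have hθ0 : 0 < θ := by
    by_contra hc
    push_neg at hc
    have : Real.sin θ ≤ 0 := Real.sin_nonpos_of_nonpos_of_neg_pi_le hc (le_of_lt hθl)
    nlinarith
  have hθπ : θ < π := by
    rcases lt_or_eq_of_le hθu with h' | h'
    · exact h'
    · exfalso; rw [h'] at h; simp [Real.sin_pi] at h; nlinarith
  have hθα : θ < α := by
    by_contra hc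
    push_neg at hc
    have h2 := mono_add_sin hc
    simp only at h2
    nlinarith
  set σ : ℝ → ℝ := fun x => (u - x) / Real.sin x with hσdef
  set Φ : ℝ → ℝ := fun x => Real.log (σ x) + σ x * Real.cos x with hΦdef
  have hfacts : ∀ x ∈ Icc θ α, 0 < Real.sin x ∧ 0 < u - x := by
    intro x hx
    refine ⟨Real.sin_pos_of_pos_of_lt_pi (lt_of_lt_of_le hθ0 hx.1) (lt_of_le_of_lt hx.2 hαπ), ?_⟩
    have := hx.2
    nlinarith
  have hD : ∀ x ∈ Icc θ α, HasDerivAt Φ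
      (((-1) * Real.sin x - (u - x) * Real.cos x) / (Real.sin x)^2 / σ x
        + (((-1) * Real.sin x - (u - x) * Real.cos x) / (Real.sin x)^2 * Real.cos x
          + σ x * (-Real.sin x))) x := by
    intro x hx
    obtain ⟨hS, hU⟩ := hfacts x hx
    have h1 : HasDerivAt (fun x : ℝ => u - x) (-1) x := by
      simpa using (hasDerivAt_id x).const_sub u
    have hσx : HasDerivAt σ (((-1) * Real.sin x - (u - x) * Real.cos x) / (Real.sin x)^2) x :=
      h1.div (Real.hasDerivAt_sin x) (ne_of_gt hS)
    have hσpos : 0 < σ x := div_pos hU hS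
    have hlog := hσx.log (ne_of_gt hσpos)
    exact hlog.add (hσx.mul (Real.hasDerivAt_cos x))
  have hanti : StrictAntiOn Φ (Icc θ α) := by
    apply strictAntiOn_of_deriv_neg (convex_Icc θ α)
    · exact fun x hx => ((hD x hx).continuousAt).continuousWithinAt
    · intro x hx
      rw [interior_Icc] at hx
      have hx' : x ∈ Icc θ α := Ioo_subset_Icc_self hx
      rw [(hD x hx').deriv]
      obtain ⟨hS, hU⟩ := hfacts x hx'
      have hσx : σ x = (u - x)/Real.sin x := rfl
      rw [hσx]
      set S := Real.sin x
      set C := Real.cos x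
      set U := u - x
      have key : ((-1) * S - U * C)/S^2/(U/S) + (((-1)*S - U*C)/S^2*C + U/S*(-S))
          = -(((S + U*C)^2 + (S*U)^2) / (S^2 * U)) := by
        field_simp
        ring
      rw [key]
      have hnum : 0 < (S + U*C)^2 + (S*U)^2 := by
        have : 0 < (S*U)^2 := by positivity
        nlinarith [sq_nonneg (S + U*C)]
      have hden : 0 < S^2 * U := by positivity
      have := div_pos hnum hden
      linarith
  have hθmem : θ ∈ Icc θ α := ⟨le_refl θ, le_of_lt hθα⟩
  have hαmem : α ∈ Icc θ α := ⟨le_of_lt hθα, le_refl α⟩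
  have hlt := hanti hθmem hαmem hθα
  have hσθ : σ θ = 1 := by
    have h2 : u - θ = Real.sin θ := by linarith
    rw [hσdef]
    simp only
    rw [h2, div_self (ne_of_gt (hfacts θ hθmem).1)]
  have hσα : σ α = s := by
    rw [hσdef]
    simp only
    rw [show u - α = s * Real.sin α by rw [hu]; ring]
    rw [mul_div_assoc, div_self (ne_of_gt hsinα), mul_one]
  rw [hΦdef] at hlt
  simp only at hlt
  rw [hσθ, hσα, Real.log_one] at hlt
  linarith

private lemma lemR_nonneg {s α θ : ℝ} (hs0 : 0 < s) (hs1 : s < 1)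
    (hαl : -π < α) (hαu : α ≤ π) (hθl : -π < θ) (hθu : θ ≤ π)
    (hsin : 0 ≤ Real.sin α)
    (h : θ + Real.sin θ = α + s * Real.sin α) :
    Real.log s + s * Real.cos α < Real.cos θ := by
  rcases lt_or_eq_of_le hsin with hsin' | hsin'
  · -- 0 < sin α
    have hα0 : 0 < α := by
      by_contra hc
      push_neg at hc
      have := Real.sin_nonpos_of_nonpos_of_neg_pi_le hc (le_of_lt hαl)
      linarith
    have hαπ : α < π := by
      rcases lt_or_eq_of_le hαu with h' | h'
      · exact h'
      · exfalso; rw [h'] at hsin'; simp [Real.sin_pi] at hsin'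
    exact lemR_core hs0 hs1 hα0 hαπ hθl hθu h
  · -- sin α = 0
    rcases eq_or_lt_of_le hαu with hπ | hαπ
    · -- α = π
      subst hπ
      rw [Real.sin_pi, mul_zero, add_zero] at h
      have hθπ : θ = π := by
        by_contra hc
        have hθπ' : θ < π := lt_of_le_of_ne hθu hc
        rcases le_or_gt θ 0 with h0 | h0
        · have := Real.sin_le_one θ
          nlinarith [Real.pi_gt_three]
        · have h1 : Real.sin (π - θ) < π - θ := Real.sin_lt (by linarith)
          rw [Real.sin_pi_sub] at h1
          linarith
      subst hθπ
      rw [Real.cos_pi]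
      have := Real.log_lt_sub_one_of_pos hs0 (ne_of_lt hs1)
      linarith
    · -- α < π,  so α = 0
      have hα0 : α = 0 := by
        rw [← Real.sin_eq_zero_iff_of_lt_of_lt hαl hαπ]
        exact hsin'.symm
      subst hα0
      rw [Real.sin_zero, mul_zero, add_zero] at h
      have hθ0 : θ = 0 := by
        by_contra hc
        rcases lt_or_gt_of_ne hc with h0 | h0
        · have := Real.sin_nonpos_of_nonpos_of_neg_pi_le (le_of_lt h0) (le_of_lt hθl)
          nlinarith
        · have := Real.sin_nonneg_of_nonneg_of_le_pi (le_of_lt h0) hθu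
          nlinarith
      subst hθ0
      rw [Real.cos_zero]
      have := Real.log_neg hs0 hs1
      linarith

private lemma lemR {s α θ : ℝ} (hs0 : 0 < s) (hs1 : s < 1)
    (hαl : -π < α) (hαu : α ≤ π) (hθl : -π < θ) (hθu : θ ≤ π)
    (h : θ + Real.sin θ = α + s * Real.sin α) :
    Real.log s + s * Real.cos α < Real.cos θ := by
  rcases le_or_gt 0 (Real.sin α) with hsin | hsin
  · exact lemR_nonneg hs0 hs1 hαl hαu hθl hθu hsin h
  · have hα0 : α < 0 := by
      by_contra hc
      push_neg at hc
      have := Real.sin_nonneg_of_nonneg_of_le_pi hc hαu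
      linarith
    have hθπ : θ < π := by
      rcases lt_or_eq_of_le hθu with h' | h'
      · exact h'
      · exfalso
        rw [h', Real.sin_pi, add_zero] at h
        nlinarith [Real.pi_pos, mul_pos hs0 (neg_pos.mpr hsin)]
    have h' : (-θ) + Real.sin (-θ) = (-α) + s * Real.sin (-α) := by
      rw [Real.sin_neg, Real.sin_neg]
      ring_nf
      linarith
    have hres := lemR_nonneg hs0 hs1 (by linarith : -π < -α) (by linarith : -α ≤ π)
      (by linarith : -π < -θ) (by linarith : -θ ≤ π)
      (by rw [Real.sin_neg]; linarith) h'
    rwa [Real.cos_neg, Real.cos_neg] at hres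

/-- range helper -/
private lemma rangeB {s α : ℝ} (hs0 : 0 ≤ s) (hs1 : s ≤ 1)
    (hαl : -π < α) (hαu : α ≤ π) :
    -π < α + s * Real.sin α ∧ α + s * Real.sin α ≤ π := by
  constructor
  · rcases le_or_gt 0 (Real.sin α) with hsin | hsin
    · nlinarith [mul_nonneg hs0 hsin]
    · -- sin α < 0 so α ∈ (-π, 0)
      have hα0 : α < 0 := by
        by_contra hc
        push_neg at hc
        have := Real.sin_nonneg_of_nonneg_of_le_pi hc hαu
        linarith
      have h1 : Real.sin (π + α) < π + α := Real.sin_lt (by linarith)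
      have h2 : Real.sin (π + α) = -Real.sin α := by
        rw [show π + α = π - (-α) by ring, Real.sin_pi_sub, Real.sin_neg]
      -- s * sin α ≥ sin α  since s ≤ 1, sin α < 0
      have h3 : Real.sin α ≤ s * Real.sin α := by nlinarith
      nlinarith
  · rcases le_or_gt (Real.sin α) 0 with hsin | hsin
    · nlinarith [mul_nonneg hs0 (neg_nonneg.mpr hsin), Real.pi_pos]
    · have hα0 : 0 < α := by
        by_contra hc
        push_neg at hc
        have := Real.sin_nonpos_of_nonpos_of_neg_pi_le hc (le_of_lt hαl)
        linarith
      have h1 : Real.sin α ≤ π - α := by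
        have := Real.sin_le (by linarith : (0:ℝ) ≤ π - α)
        rw [Real.sin_pi_sub] at this
        linarith
      nlinarith

section AuxComplex
open Complex


private lemma rangeB' {s α : ℝ} (hs0 : 0 ≤ s) (hs1 : s ≤ 1)
    (hαl : -π < α) (hαu : α ≤ π) :
    -π < α + s * Real.sin α ∧ α + s * Real.sin α ≤ π := by
  constructor
  · rcases le_or_gt 0 (Real.sin α) with hsin | hsin
    · nlinarith [mul_nonneg hs0 hsin]
    · have hα0 : α < 0 := by
        by_contra hc
        push_neg at hc
        have := Real.sin_nonneg_of_nonneg_of_le_pi hc hαu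
        linarith
      have h1 : Real.sin (π + α) < π + α := Real.sin_lt (by linarith)
      have h2 : Real.sin (π + α) = -Real.sin α := by
        rw [show π + α = π - (-α) by ring, Real.sin_pi_sub, Real.sin_neg]
      have h3 : Real.sin α ≤ s * Real.sin α := by nlinarith
      nlinarith
  · rcases le_or_gt (Real.sin α) 0 with hsin | hsin
    · nlinarith [mul_nonneg hs0 (neg_nonneg.mpr hsin), Real.pi_pos]
    · have hα0 : 0 < α := by
        by_contra hc
        push_neg at hc
        have := Real.sin_nonpos_of_nonpos_of_neg_pi_le hc (le_of_lt hαl)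
        linarith
      have h1 : Real.sin α ≤ π - α := by
        have := Real.sin_le (by linarith : (0:ℝ) ≤ π - α)
        rw [Real.sin_pi_sub] at this
        linarith
      nlinarith

private lemma polar_decomp (w : ℂ) :
    w * Complex.exp w = (‖w‖ : ℂ) *
      Complex.exp (((‖w‖ * Real.cos (Complex.arg w) : ℝ) : ℂ)
        + ((Complex.arg w + ‖w‖ * Real.sin (Complex.arg w) : ℝ) : ℂ) * Complex.I) := by
  have hw2 : ((‖w‖ * Real.cos (Complex.arg w) : ℝ) : ℂ)
      + ((Complex.arg w + ‖w‖ * Real.sin (Complex.arg w) : ℝ) : ℂ) * Complex.I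
      = (Complex.arg w : ℂ) * Complex.I + w := by
    apply Complex.ext <;> simp
  rw [hw2, Complex.exp_add, ← mul_assoc, Complex.norm_mul_exp_arg_mul_I]

private lemma keyC {t : ℝ} (ht : 1 ≤ t) {ζ w : ℂ} (hζ : ‖ζ‖ = 1)
    (hw : ‖w‖ < 1) :
    w * Complex.exp w ≠ (t : ℂ) * ζ * Complex.exp ζ := by
  intro heq
  have ht0 : (0:ℝ) < t := by linarith
  have hζ0 : ζ ≠ 0 := by intro h; rw [h] at hζ; simp at hζ
  have hw0 : w ≠ 0 := by
    intro h
    rw [h, zero_mul] at heq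
    exact (mul_ne_zero (mul_ne_zero (by exact_mod_cast ht0.ne' : (t:ℂ) ≠ 0) hζ0)
      (Complex.exp_ne_zero ζ)) heq.symm
  set s := ‖w‖ with hsdef
  set α := Complex.arg w with hαdef
  set θ := Complex.arg ζ with hθdef
  have hs0 : 0 < s := norm_pos_iff.mpr hw0
  have h1 := polar_decomp w
  have h2 := polar_decomp ζ
  rw [← hθdef, hζ] at h2
  simp only [one_mul, Complex.ofReal_one] at h2
  rw [← hsdef, ← hαdef] at h1
  have heq2 : (s:ℂ) * Complex.exp (((s * Real.cos α : ℝ) : ℂ) + ((α + s * Real.sin α : ℝ) : ℂ) * Complex.I)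
      = (t:ℂ) * Complex.exp (((Real.cos θ : ℝ) : ℂ) + ((θ + Real.sin θ : ℝ) : ℂ) * Complex.I) := by
    rw [← h1, heq, mul_assoc, h2]
  -- moduli
  have habs := congrArg (fun x : ℂ => ‖x‖) heq2
  simp only [norm_mul, Complex.norm_real, Real.norm_eq_abs, Complex.norm_exp, Complex.add_re,
    Complex.ofReal_re, Complex.mul_re, Complex.I_re, Complex.ofReal_im, Complex.I_im,
    mul_zero, mul_one, zero_mul, sub_zero, zero_sub, zero_add] at habs
  rw [abs_of_pos hs0, abs_of_pos ht0] at habs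
  have habs' : s * Real.exp (s * Real.cos α) = t * Real.exp (Real.cos θ) := by
    convert habs using 3 <;> ring
  have hineq : Real.cos θ ≤ Real.log s + s * Real.cos α := by
    have h5 : Real.exp (Real.cos θ) ≤ s * Real.exp (s * Real.cos α) := by
      nlinarith [Real.exp_pos (Real.cos θ)]
    have h6 := Real.log_le_log (Real.exp_pos _) h5
    rwa [Real.log_exp, Real.log_mul hs0.ne' (Real.exp_pos _).ne', Real.log_exp] at h6
  -- angles
  have hcoef : (s:ℂ) * Complex.exp ((s * Real.cos α : ℝ) : ℂ)
      = (t:ℂ) * Complex.exp ((Real.cos θ : ℝ) : ℂ) := by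
    have hc := congrArg (fun x : ℝ => (x : ℂ)) habs'
    simpa only [Complex.ofReal_mul, Complex.ofReal_exp] using hc
  rw [Complex.exp_add, Complex.exp_add, ← mul_assoc, ← mul_assoc, hcoef] at heq2
  have hcne : (t:ℂ) * Complex.exp ((Real.cos θ : ℝ) : ℂ) ≠ 0 :=
    mul_ne_zero (by exact_mod_cast ht0.ne') (Complex.exp_ne_zero _)
  have hang : Complex.exp (((α + s * Real.sin α : ℝ) : ℂ) * Complex.I)
      = Complex.exp (((θ + Real.sin θ : ℝ) : ℂ) * Complex.I) := mul_left_cancel₀ hcne heq2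
  obtain ⟨n, hn⟩ := Complex.exp_eq_exp_iff_exists_int.mp hang
  have hn' : ((α + s * Real.sin α : ℝ) : ℂ) * Complex.I
      = ((θ + Real.sin θ + n * (2 * π) : ℝ) : ℂ) * Complex.I := by
    rw [hn]; push_cast; ring
  have hn2 := mul_right_cancel₀ Complex.I_ne_zero hn'
  have hn3 : α + s * Real.sin α = θ + Real.sin θ + n * (2 * π) := by exact_mod_cast hn2
  have hB := rangeB' (le_of_lt hs0) (le_of_lt hw) (Complex.neg_pi_lt_arg w) (Complex.arg_le_pi w)
  rw [← hαdef] at hB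
  have hD := rangeB' zero_le_one (le_refl (1:ℝ)) (Complex.neg_pi_lt_arg ζ) (Complex.arg_le_pi ζ)
  rw [← hθdef, one_mul] at hD
  have hn0 : n = 0 := by
    have hpi := Real.pi_pos
    have h7 : -1 < (n:ℝ) ∧ (n:ℝ) < 1 := by
      constructor <;> nlinarith [hB.1, hB.2, hD.1, hD.2]
    have h8 : -1 < n ∧ n < 1 := by exact_mod_cast h7
    omega
  rw [hn0] at hn3
  push_cast at hn3
  have hfin := lemR hs0 hw (Complex.neg_pi_lt_arg w) (Complex.arg_le_pi w)
    (Complex.neg_pi_lt_arg ζ) (Complex.arg_le_pi ζ)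
    (by rw [← hαdef, ← hθdef] at *; linarith)
  linarith


end AuxComplex
end AuxLemmas

/-- `F` is subordinate to `G` on the unit disk `𝔻`. -/
def Subordinate (F G : ℂ → ℂ) : Prop :=
  ∃ ω : ℂ → ℂ, AnalyticOn ℂ ω (ball (0 : ℂ) 1) ∧ ω 0 = 0 ∧
    (∀ z ∈ ball (0 : ℂ) 1, ω z ∈ ball (0 : ℂ) 1) ∧
    ∀ z ∈ ball (0 : ℂ) 1, F z = G (ω z)

/-- if `β ≥ 1` and `1 + β·z·p'(z) ≺ 1 + z e^z`, then `p ≺ e^z`. -/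
theorem stmt_12 (p : ℂ → ℂ) (hp : AnalyticOn ℂ p (ball (0 : ℂ) 1)) (hp0 : p 0 = 1)
    (β : ℝ) (hβ : 1 ≤ β)
    (hsub : Subordinate (fun z => 1 + (β : ℂ) * z * deriv p z)
      (fun z => 1 + z * Complex.exp z)) :
    Subordinate p (fun z => Complex.exp z) := by
  obtain ⟨ω, hωan, hω0, hωmem, hωeq⟩ := hsub
  have hωeq' : ∀ z ∈ ball (0:ℂ) 1, (β:ℂ) * z * deriv p z = ω z * Complex.exp (ω z) := by
    intro z hz
    have h := hωeq z hz
    simp only at h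
    linear_combination h
  have hpa : ∀ z ∈ ball (0:ℂ) 1, AnalyticAt ℂ p z :=
    fun z hz => (isOpen_ball.analyticOn_iff_analyticOnNhd.mp hp) z hz
  have hpc : ContinuousOn p (ball (0:ℂ) 1) :=
    fun z hz => ((hpa z hz).continuousAt).continuousWithinAt
  set U : Set ℂ := {v : ℂ | 0 < v.re} ∩ Complex.log ⁻¹' (ball (0:ℂ) 1) with hUdef
  have hUmem : ∀ v : ℂ, v ∈ U ↔ 0 < v.re ∧ ‖Complex.log v‖ < 1 := by
    intro v
    simp [hUdef, mem_ball_zero_iff]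
  have hUopen : IsOpen U := by
    have h2 : ContinuousOn Complex.log {v : ℂ | 0 < v.re} :=
      fun v hv => (continuousAt_clog (Or.inl hv)).continuousWithinAt
    exact h2.isOpen_inter_preimage (isOpen_lt continuous_const Complex.continuous_re) isOpen_ball
  -- MAIN CLAIM
  have main : ∀ z ∈ ball (0:ℂ) 1, p z ∈ U := by
    by_contra hcon
    push_neg at hcon
    obtain ⟨z₁, hz₁, hbad⟩ := hcon
    set GS : Set ℂ := ball (0:ℂ) 1 ∩ p ⁻¹' U with hGS
    have hGSopen : IsOpen GS := hpc.isOpen_inter_preimage isOpen_ball hUopen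
    set r₁ : ℝ := ‖z₁‖ with hr₁def
    have hr₁ : r₁ < 1 := mem_ball_zero_iff.mp hz₁
    set B : Set ℂ := closedBall (0:ℂ) r₁ \ GS with hBdef
    have hz₁B : z₁ ∈ B := ⟨mem_closedBall_zero_iff.mpr (le_refl r₁), fun hz => hbad hz.2⟩
    have hBc : IsCompact B :=
      (isCompact_closedBall (0:ℂ) r₁).of_isClosed_subset (Metric.isClosed_closedBall.sdiff hGSopen)
        Set.diff_subset
    obtain ⟨z₀, hz₀B, hz₀min'⟩ := hBc.exists_isMinOn ⟨z₁, hz₁B⟩ continuous_norm.continuousOn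
    have hz₀min : ∀ z ∈ B, ‖z₀‖ ≤ ‖z‖ := isMinOn_iff.mp hz₀min'
    set r₀ : ℝ := ‖z₀‖ with hr₀def
    have hr₀r₁ : r₀ ≤ r₁ := mem_closedBall_zero_iff.mp hz₀B.1
    have hr₀1 : r₀ < 1 := lt_of_le_of_lt hr₀r₁ hr₁
    have hz₀ball : z₀ ∈ ball (0:ℂ) 1 := mem_ball_zero_iff.mpr hr₀1
    have hgood_lt : ∀ z : ℂ, ‖z‖ < r₀ → p z ∈ U := by
      intro z hz
      by_contra hc
      have hzB : z ∈ B := ⟨mem_closedBall_zero_iff.mpr (le_trans hz.le hr₀r₁),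
        fun hmem => hc hmem.2⟩
      exact absurd (hz₀min z hzB) (not_le.mpr hz)
    have h0U : p 0 ∈ U := by
      rw [hUmem, hp0, Complex.log_one]
      simp
    have hr₀pos : 0 < r₀ := by
      rcases (norm_nonneg z₀).lt_or_eq with h | h
      · exact h
      · exfalso
        have hz00 : z₀ = 0 := norm_eq_zero.mp h.symm
        exact hz₀B.2 (hz00 ▸ ⟨mem_ball_zero_iff.mpr (by norm_num), h0U⟩)
    have hnGood : p z₀ ∉ U := fun h => hz₀B.2 ⟨hz₀ball, h⟩
    -- boundary facts
    have hbdry : ∀ z : ℂ, ‖z‖ ≤ r₀ →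
        p z ∈ Complex.slitPlane ∧ ‖Complex.log (p z)‖ ≤ 1 := by
      intro z hz
      rcases lt_or_eq_of_le hz with hlt | heq
      · have hU := (hUmem _).mp (hgood_lt z hlt)
        exact ⟨Or.inl hU.1, le_of_lt hU.2⟩
      · have hzball : z ∈ ball (0:ℂ) 1 := mem_ball_zero_iff.mpr (by rw [heq]; exact hr₀1)
        have htend0 : Filter.Tendsto (fun t : ℝ => (t:ℂ) * z)
            (nhdsWithin 1 (Set.Iio 1)) (nhds z) := by
          have h1 : Filter.Tendsto (fun t : ℝ => (t:ℂ) * z) (nhds 1) (nhds (((1:ℝ):ℂ) * z)) :=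
            ((Complex.continuous_ofReal.mul continuous_const).tendsto 1)
          simpa using h1.mono_left nhdsWithin_le_nhds
        have htendp : Filter.Tendsto (fun t : ℝ => p ((t:ℂ) * z))
            (nhdsWithin 1 (Set.Iio 1)) (nhds (p z)) :=
          ((hpa z hzball).continuousAt.tendsto).comp htend0
        have hev : ∀ᶠ t : ℝ in nhdsWithin 1 (Set.Iio 1),
            0 < (p ((t:ℂ)*z)).re ∧ ‖Complex.log (p ((t:ℂ)*z))‖ < 1 := by
          filter_upwards [Ioo_mem_nhdsLT_of_mem
            (show (1:ℝ) ∈ Set.Ioc 0 1 from ⟨zero_lt_one, le_refl 1⟩)] with t ht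
          refine (hUmem _).mp (hgood_lt _ ?_)
          have hnorm : ‖(t:ℂ) * z‖ = t * r₀ := by
            rw [norm_mul, Complex.norm_real, Real.norm_eq_abs, abs_of_pos ht.1, heq]
          rw [hnorm]
          nlinarith [ht.2, hr₀pos]
        have hrege : 0 ≤ (p z).re := by
          apply ge_of_tendsto (Complex.continuous_re.continuousAt.tendsto.comp htendp)
          filter_upwards [hev] with t ht using le_of_lt ht.1
        have habs_ge : Real.exp (-1) ≤ ‖p z‖ := by
          apply ge_of_tendsto (continuous_norm.continuousAt.tendsto.comp htendp)
          filter_upwards [hev] with t ht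
          have hpzne : p ((t:ℂ)*z) ≠ 0 := by
            intro h
            rw [h] at ht
            simp at ht
          have hexp : Complex.exp (Complex.log (p ((t:ℂ)*z))) = p ((t:ℂ)*z) :=
            Complex.exp_log hpzne
          show Real.exp (-1) ≤ ‖p ((t:ℂ)*z)‖
          rw [← hexp, Complex.norm_exp]
          apply Real.exp_le_exp.mpr
          have h1 := abs_le.mp (Complex.abs_re_le_norm (Complex.log (p ((t:ℂ)*z))))
          linarith [ht.2]
        have hpzne : p z ≠ 0 := by
          intro h
          rw [h] at habs_ge
          simp at habs_ge
          linarith [Real.exp_pos (-1), habs_ge]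
        have hslitz : p z ∈ Complex.slitPlane := by
          rcases lt_or_eq_of_le hrege with h | h
          · exact Or.inl h
          · refine Or.inr fun him => hpzne (Complex.ext h.symm him)
        have htendlog := (continuousAt_clog hslitz).tendsto.comp htendp
        refine ⟨hslitz, ?_⟩
        apply le_of_tendsto (continuous_norm.continuousAt.tendsto.comp htendlog)
        filter_upwards [hev] with t ht using le_of_lt ht.2
    -- L, V
    set L : ℂ → ℂ := fun z => Complex.log (p z) with hLdef
    set V : Set ℂ := ball (0:ℂ) 1 ∩ p ⁻¹' Complex.slitPlane with hVdef
    have hVopen : IsOpen V := hpc.isOpen_inter_preimage isOpen_ball Complex.isOpen_slitPlane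
    have hsubV : closedBall (0:ℂ) r₀ ⊆ V := by
      intro z hz
      rw [mem_closedBall_zero_iff] at hz
      exact ⟨mem_ball_zero_iff.mpr (lt_of_le_of_lt hz hr₀1), (hbdry z hz).1⟩
    have hLdiff : ∀ z ∈ V, DifferentiableAt ℂ L z := fun z hz =>
      ((analyticAt_clog hz.2).comp (hpa z hz.1)).differentiableAt
    have hexpL : ∀ z ∈ V, Complex.exp (L z) = p z := fun z hz =>
      Complex.exp_log (Complex.slitPlane_ne_zero hz.2)
    have hz₀V : z₀ ∈ V := hsubV (mem_closedBall_zero_iff.mpr (le_refl r₀))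
    have hLle : ∀ z : ℂ, ‖z‖ ≤ r₀ → ‖L z‖ ≤ 1 := fun z hz => (hbdry z hz).2
    have hLlt : ∀ z : ℂ, ‖z‖ < r₀ → ‖L z‖ < 1 :=
      fun z hz => ((hUmem _).mp (hgood_lt z hz)).2
    set ζ : ℂ := L z₀ with hζdef
    have hζ1 : ‖ζ‖ = 1 := by
      refine le_antisymm (hLle z₀ (le_refl _)) ?_
      by_contra hc
      push_neg at hc
      apply hnGood
      rw [hUmem]
      constructor
      · rw [← hexpL z₀ hz₀V, Complex.exp_re]
        apply mul_pos (Real.exp_pos _)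
        apply Real.cos_pos_of_mem_Ioo
        have him := abs_le.mp (Complex.abs_im_le_norm ζ)
        have hpi := Real.pi_gt_three
        constructor
        · simp only [Set.mem_Ioo] at *
          linarith [him.1]
        · linarith [him.2]
      · exact hc
    -- ==== Block D : g, Schwarz, boundary derivative ====
    set W : Set ℂ := {z : ℂ | z * z₀ ∈ V} with hWdef
    have hWopen : IsOpen W := hVopen.preimage (continuous_id.mul continuous_const)
    have hsubW : closedBall (0:ℂ) 1 ⊆ W := by
      intro z hz
      rw [mem_closedBall_zero_iff] at hz
      apply hsubV
      rw [mem_closedBall_zero_iff, norm_mul]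
      calc ‖z‖ * ‖z₀‖ ≤ 1 * r₀ :=
            mul_le_mul hz (le_refl r₀) (norm_nonneg z₀) zero_le_one
      _ = r₀ := one_mul r₀
    set g : ℂ → ℂ := fun z => L (z * z₀) with hgdef
    have hgdiffW : ∀ z ∈ W, DifferentiableAt ℂ g z := fun z hz =>
      ((hLdiff _ hz).comp z (differentiableAt_id.mul (differentiableAt_const z₀)))
    have hgd : DifferentiableOn ℂ g (ball (0:ℂ) 1) := fun z hz =>
      (hgdiffW z (hsubW (ball_subset_closedBall hz))).differentiableWithinAt
    have hg0 : g 0 = 0 := by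
      show L ((0:ℂ) * z₀) = 0
      rw [zero_mul]
      show Complex.log (p 0) = 0
      rw [hp0, Complex.log_one]
    have hgmaps : Set.MapsTo g (ball (0:ℂ) 1) (ball (0:ℂ) 1) := by
      intro z hz
      rw [mem_ball_zero_iff] at hz ⊢
      apply hLlt
      rw [norm_mul]
      exact mul_lt_of_lt_one_left hr₀pos hz
    have hsch : ∀ t : ℝ, 0 < t → t < 1 → ‖g (t:ℂ)‖ ≤ t := by
      intro t h0 h1
      have habs : ‖(t:ℂ)‖ < 1 := by
        rw [Complex.norm_real, Real.norm_eq_abs, abs_of_pos h0]; exact h1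
      have := Complex.norm_le_norm_of_mapsTo_ball_self hgd (hgmaps.mono_right ball_subset_closedBall) hg0 habs
      rwa [Complex.norm_real, Real.norm_eq_abs, abs_of_pos h0] at this
    -- derivative of g at 1
    have hLz₀der : HasDerivAt L (deriv L z₀) z₀ := (hLdiff z₀ hz₀V).hasDerivAt
    have hmulz₀ : HasDerivAt (fun z : ℂ => z * z₀) z₀ 1 := by
      simpa using (hasDerivAt_id (1:ℂ)).mul_const z₀
    have hgder : HasDerivAt g (deriv L z₀ * z₀) 1 := by
      have h1 : HasDerivAt L (deriv L z₀) ((fun z : ℂ => z * z₀) 1) := by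
        simpa using hLz₀der
      exact h1.comp 1 hmulz₀
    -- Im part : conj ζ * d is real
    have hGmax : ∀ x : ℝ, ‖g (Complex.exp ((x:ℂ) * Complex.I))‖ ≤ 1 := by
      intro x
      apply hLle
      rw [norm_mul, Complex.norm_exp]
      simp only [Complex.mul_re, Complex.ofReal_re, Complex.I_re, Complex.ofReal_im,
        Complex.I_im, mul_zero, mul_one, zero_mul, sub_zero, zero_sub]
      norm_num
      rw [hr₀def]
    have hE : ∀ x : ℝ, HasDerivAt (fun y : ℝ => Complex.exp ((y:ℂ) * Complex.I))
        (Complex.exp ((x:ℂ) * Complex.I) * Complex.I) x := by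
      intro x
      have h1 : HasDerivAt (fun z : ℂ => z * Complex.I) Complex.I (x:ℂ) := by
        simpa using (hasDerivAt_id ((x:ℝ):ℂ)).mul_const Complex.I
      have h2 : HasDerivAt (fun z : ℂ => Complex.exp (z * Complex.I))
          (Complex.exp ((x:ℂ) * Complex.I) * Complex.I) (x:ℂ) :=
        (Complex.hasDerivAt_exp _).comp _ h1
      exact h2.comp_ofReal
    have hgE : HasDerivAt (fun x : ℝ => g (Complex.exp ((x:ℂ) * Complex.I)))
        (Complex.I • (deriv L z₀ * z₀)) 0 := by
      have h1 : HasDerivAt g (deriv L z₀ * z₀)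
          ((fun y : ℝ => Complex.exp ((y:ℂ) * Complex.I)) 0) := by
        simpa using hgder
      have h2 := hE 0
      have h3 := h1.scomp (0:ℝ) h2
      have h4 : Complex.exp (((0:ℝ):ℂ) * Complex.I) * Complex.I = Complex.I := by simp
      rw [h4] at h3
      exact h3
    have hgEre : HasDerivAt (fun x : ℝ => (g (Complex.exp ((x:ℂ) * Complex.I))).re)
        ((Complex.I • (deriv L z₀ * z₀)).re) 0 :=
      Complex.reCLM.hasFDerivAt.comp_hasDerivAt 0 hgE
    have hgEim : HasDerivAt (fun x : ℝ => (g (Complex.exp ((x:ℂ) * Complex.I))).im)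
        ((Complex.I • (deriv L z₀ * z₀)).im) 0 :=
      Complex.imCLM.hasFDerivAt.comp_hasDerivAt 0 hgE
    set ψ : ℝ → ℝ := fun x => (g (Complex.exp ((x:ℂ) * Complex.I))).re ^ 2
        + (g (Complex.exp ((x:ℂ) * Complex.I))).im ^ 2 with hψdef
    have hψder := ((hgEre.pow 2).add (hgEim.pow 2))
    have hgE0 : g (Complex.exp (((0:ℝ):ℂ) * Complex.I)) = ζ := by
      show L (Complex.exp (((0:ℝ):ℂ) * Complex.I) * z₀) = ζ
      norm_num
      rfl
    have hψmax : IsLocalMax ψ 0 := by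
      apply Filter.Eventually.of_forall
      intro x
      have h1 : ∀ y : ℝ, ψ y = (‖g (Complex.exp ((y:ℂ) * Complex.I))‖) ^ 2 := by
        intro y
        show (g _).re ^ 2 + (g _).im ^ 2 = _
        rw [Complex.sq_norm, Complex.normSq_apply]
        ring
      show ψ x ≤ ψ 0
      rw [h1, h1]
      have h0 : ‖g (Complex.exp (((0:ℝ):ℂ) * Complex.I))‖ = 1 := by
        rw [hgE0, hζ1]
      rw [h0]
      have h2 := hGmax x
      nlinarith [norm_nonneg (g (Complex.exp ((x:ℂ) * Complex.I)))]
    have hval0 := hψmax.hasDerivAt_eq_zero hψder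
    rw [hgE0] at hval0
    have hIm : ((starRingEnd ℂ) ζ * (deriv L z₀ * z₀)).im = 0 := by
      norm_num [smul_eq_mul, Complex.mul_re, Complex.mul_im, Complex.I_re,
        Complex.I_im, Complex.conj_re, Complex.conj_im] at hval0 ⊢
      linarith
    -- Re part
    have hgder' : HasDerivAt g (deriv L z₀ * z₀) (((1:ℝ):ℂ)) := by
      rwa [Complex.ofReal_one]
    have hgR : HasDerivAt (fun t : ℝ => g ((t:ℝ):ℂ)) (deriv L z₀ * z₀) 1 :=
      hgder'.comp_ofReal
    have hmono : (nhdsWithin (1:ℝ) (Set.Iio 1)) ≤ (nhdsWithin (1:ℝ) {(1:ℝ)}ᶜ) :=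
      nhdsWithin_mono 1 (fun x hx => ne_of_lt hx)
    have h2 := (hasDerivAt_iff_tendsto_slope.mp hgR).mono_left hmono
    have h3 : Continuous (fun v : ℂ => ((starRingEnd ℂ) ζ * v).re) :=
      Complex.continuous_re.comp (continuous_const.mul continuous_id)
    have h4 := (h3.tendsto _).comp h2
    have hg1ζ : g (((1:ℝ):ℂ)) = ζ := by
      show L (((1:ℝ):ℂ) * z₀) = ζ
      norm_num
      rfl
    have hge1 : 1 ≤ ((starRingEnd ℂ) ζ * (deriv L z₀ * z₀)).re := by
      apply ge_of_tendsto h4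
      filter_upwards [Ioo_mem_nhdsLT_of_mem
        (show (1:ℝ) ∈ Set.Ioc 0 1 from ⟨zero_lt_one, le_refl 1⟩)] with t ht
      have hgt := hsch t ht.1 ht.2
      show 1 ≤ ((starRingEnd ℂ) ζ * (slope (fun t : ℝ => g ((t:ℝ):ℂ)) 1 t)).re
      rw [slope_def_module]
      simp only [hg1ζ]
      have hconj : (starRingEnd ℂ) ζ * ζ = 1 := by
        rw [mul_comm, Complex.mul_conj, Complex.normSq_eq_norm_sq, hζ1]
        norm_num
      have hexpand : ((starRingEnd ℂ) ζ * ((t - 1)⁻¹ • (g ((t:ℝ):ℂ) - ζ))).re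
          = (t - 1)⁻¹ * (((starRingEnd ℂ) ζ * g ((t:ℝ):ℂ)).re - 1) := by
        rw [mul_smul_comm, Complex.smul_re, mul_sub, hconj, Complex.sub_re, Complex.one_re]
        rfl
      rw [hexpand]
      have hre_le : ((starRingEnd ℂ) ζ * g ((t:ℝ):ℂ)).re ≤ t := by
        calc ((starRingEnd ℂ) ζ * g ((t:ℝ):ℂ)).re
            ≤ ‖(starRingEnd ℂ) ζ * g ((t:ℝ):ℂ)‖ := Complex.re_le_norm _
        _ = ‖g ((t:ℝ):ℂ)‖ := by rw [norm_mul, Complex.norm_conj, hζ1, one_mul]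
        _ ≤ t := hgt
      have ht1 : t - 1 < 0 := by linarith [ht.2]
      rw [inv_mul_eq_div, le_div_iff_of_neg ht1]
      linarith
    set c : ℝ := ((starRingEnd ℂ) ζ * (deriv L z₀ * z₀)).re with hcdef
    have hcd : (starRingEnd ℂ) ζ * (deriv L z₀ * z₀) = (c:ℂ) := by
      apply Complex.ext
      · simp [hcdef]
      · simp [hIm]
    have hdc : deriv L z₀ * z₀ = (c:ℂ) * ζ := by
      calc deriv L z₀ * z₀ = (ζ * (starRingEnd ℂ) ζ) * (deriv L z₀ * z₀) := by
            rw [Complex.mul_conj, Complex.normSq_eq_norm_sq, hζ1]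
            norm_num
      _ = ζ * ((starRingEnd ℂ) ζ * (deriv L z₀ * z₀)) := by ring
      _ = ζ * (c:ℂ) := by rw [hcd]
      _ = (c:ℂ) * ζ := mul_comm _ _
    -- derivative of p at z₀
    have hpev : (fun z => Complex.exp (L z)) =ᶠ[nhds z₀] p := by
      filter_upwards [hVopen.mem_nhds hz₀V] with z hz using hexpL z hz
    have hpzd : HasDerivAt p (Complex.exp ζ * deriv L z₀) z₀ :=
      (hLz₀der.cexp).congr_of_eventuallyEq hpev.symm
    have hdp : deriv p z₀ = Complex.exp ζ * deriv L z₀ := hpzd.deriv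
    -- final contradiction
    have heqz₀ := hωeq' z₀ hz₀ball
    have hwmem : ‖ω z₀‖ < 1 := by
      have h5 := hωmem z₀ hz₀ball
      rwa [mem_ball_zero_iff] at h5
    have hT : (1:ℝ) ≤ β * c := by nlinarith
    have hzd : z₀ * deriv L z₀ = (c:ℂ) * ζ := by rw [mul_comm]; exact hdc
    refine keyC hT hζ1 hwmem ?_
    calc ω z₀ * Complex.exp (ω z₀) = ↑β * z₀ * deriv p z₀ := heqz₀.symm
    _ = ↑β * Complex.exp ζ * (z₀ * deriv L z₀) := by rw [hdp]; ring
    _ = ↑β * Complex.exp ζ * ((c:ℂ) * ζ) := by rw [hzd]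
    _ = ((β * c : ℝ):ℂ) * ζ * Complex.exp ζ := by push_cast; ring

  -- construction
  refine ⟨fun z => Complex.log (p z), ?_, ?_, ?_, ?_⟩
  · apply AnalyticOnNhd.analyticOn
    intro z hz
    exact (analyticAt_clog (Or.inl ((hUmem _).mp (main z hz)).1)).comp (hpa z hz)
  · show Complex.log (p 0) = 0
    rw [hp0, Complex.log_one]
  · intro z hz
    rw [mem_ball_zero_iff]
    exact ((hUmem _).mp (main z hz)).2
  · intro z hz
    have hne : p z ≠ 0 := by
      intro h
      have h1 := ((hUmem _).mp (main z hz)).1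
      rw [h] at h1
      simp at h1
    exact (Complex.exp_log hne).symm
end

section
/- Let p be analytic on 𝔻 with p(0) = 1 and let β ≥ (e − 1)/(√2 − 1) be a real number. If the function z ↦ 1 + β·z·p'(z) is subordinate to ℘(z) = 1 + z e^z, then p(z) is subordinate to √(1+z), where √(1+z) = exp((1/2)·Log(1+z)) is the principal branch. -/
open Complex Metric intervalIntegral

/-- Principal square root of a square with positive real part. -/
lemma sqrt_sq_aux (w : ℂ) (hw : 0 < w.re) :
    Complex.exp ((1/2 : ℂ) * Complex.log (w^2)) = w := by
  have hw0 : w ≠ 0 := fun h => by simp [h] at hw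
  set s := Complex.exp ((1/2 : ℂ) * Complex.log (w^2)) with hs
  have hs2 : s ^ 2 = w ^ 2 := by
    rw [hs, ← Complex.exp_nat_mul,
      show (2 : ℕ) * ((1/2 : ℂ) * Complex.log (w^2)) = Complex.log (w^2) by push_cast; ring,
      Complex.exp_log (pow_ne_zero 2 hw0)]
  have hsre : 0 ≤ s.re := by
    rw [hs, Complex.exp_re]
    apply mul_nonneg (Real.exp_nonneg _)
    apply Real.cos_nonneg_of_mem_Icc
    constructor
    · simp [Complex.mul_im, Complex.div_im]
      nlinarith [Complex.neg_pi_lt_arg (w^2), Real.pi_pos, Complex.log_im (w^2)]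
    · simp [Complex.mul_im]
      nlinarith [Complex.arg_le_pi (w^2), Real.pi_pos, Complex.log_im (w^2)]
  rcases sq_eq_sq_iff_eq_or_eq_neg.mp hs2 with h | h
  · exact h
  · exfalso
    rw [h] at hsre
    simp at hsre
    linarith

/-- Integral growth estimate. -/
lemma estimate_aux (p : ℂ → ℂ) (hp : AnalyticOnNhd ℂ p (ball (0 : ℂ) 1)) (hp0 : p 0 = 1)
    (β : ℝ) (hβ0 : 0 < β)
    (hd : ∀ w ∈ ball (0 : ℂ) 1, w ≠ 0 → ‖deriv p w‖ ≤ Real.exp (‖w‖) / β)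
    (z : ℂ) (hz : z ∈ ball (0 : ℂ) 1) :
    ‖p z - 1‖ ≤ (Real.exp (‖z‖) - 1) / β := by
  rcases eq_or_ne z 0 with rfl | hz0
  · simp [hp0]
  have hzball : ∀ t : ℝ, t ∈ Set.uIcc (0:ℝ) 1 → (t : ℂ) * z ∈ ball (0 : ℂ) 1 := by
    intro t ht
    rw [Set.uIcc_of_le (by norm_num)] at ht
    rw [mem_ball_zero_iff] at hz ⊢
    calc ‖(t:ℂ) * z‖ = |t| * ‖z‖ := by simp
    _ ≤ 1 * ‖z‖ := by
        apply mul_le_mul_of_nonneg_right _ (norm_nonneg z)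
        rw [_root_.abs_of_nonneg ht.1]; exact ht.2
    _ < 1 := by simpa using hz
  have hderiv : ∀ t ∈ Set.uIcc (0:ℝ) 1,
      HasDerivAt (fun t : ℝ => p ((t : ℂ) * z)) (deriv p ((t:ℂ) * z) * z) t := by
    intro t ht
    have h1 : HasDerivAt (fun t : ℝ => (t : ℂ) * z) z t := by
      simpa using (Complex.ofRealCLM.hasDerivAt (x := t)).mul_const z
    have h2 : DifferentiableAt ℂ p ((t:ℂ) * z) := (hp _ (hzball t ht)).differentiableAt
    exact h2.hasDerivAt.comp t h1
  have hcont : ContinuousOn (fun t : ℝ => deriv p ((t:ℂ) * z) * z) (Set.uIcc (0:ℝ) 1) := by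
    apply ContinuousOn.mul _ continuousOn_const
    exact (hp.deriv.continuousOn).comp (by fun_prop) hzball
  have hint : IntervalIntegrable (fun t : ℝ => deriv p ((t:ℂ) * z) * z)
      MeasureTheory.volume 0 1 := hcont.intervalIntegrable
  have hftc : ∫ t in (0:ℝ)..1, deriv p ((t:ℂ) * z) * z = p z - 1 := by
    rw [integral_eq_sub_of_hasDerivAt hderiv hint]
    simp [hp0]
  set r := ‖z‖ with hr
  have hr0 : 0 < r := by simpa [hr] using norm_pos_iff.mpr hz0
  have hGint : IntervalIntegrable (fun t : ℝ => r * Real.exp (t * r) / β)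
      MeasureTheory.volume 0 1 := (Continuous.intervalIntegrable (by fun_prop)) _ _
  have hGval : ∫ t in (0:ℝ)..1, r * Real.exp (t * r) / β = (Real.exp r - 1) / β := by
    have : ∀ t ∈ Set.uIcc (0:ℝ) 1,
        HasDerivAt (fun t : ℝ => Real.exp (t * r) / β) (r * Real.exp (t * r) / β) t := by
      intro t _
      have h1 : HasDerivAt (fun t : ℝ => t * r) r t := by
        simpa using (hasDerivAt_id t).mul_const r
      have := ((Real.hasDerivAt_exp (t * r)).comp t h1).div_const β
      rw [show r * Real.exp (t * r) / β = Real.exp (t * r) * r / β by ring]; exact this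
    rw [integral_eq_sub_of_hasDerivAt this (hGint)]
    simp [sub_div, one_div]
  have hbound : ‖∫ t in (0:ℝ)..1, deriv p ((t:ℂ) * z) * z‖ ≤
      ∫ t in (0:ℝ)..1, r * Real.exp (t * r) / β := by
    have habs : |∫ t in (0:ℝ)..1, r * Real.exp (t * r) / β| = ∫ t in (0:ℝ)..1, r * Real.exp (t * r) / β := by
      apply _root_.abs_of_nonneg
      apply intervalIntegral.integral_nonneg (by norm_num)
      intro u _; positivity
    rw [← habs]
    apply norm_integral_le_abs_of_norm_le _ hGint
    rw [MeasureTheory.ae_restrict_iff' measurableSet_uIoc]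
    apply Filter.Eventually.of_forall
    intro t ht
    rw [Set.uIoc_of_le (by norm_num : (0:ℝ) ≤ 1)] at ht
    have ht0 : 0 < t := ht.1
    have htz : (t:ℂ) * z ≠ 0 := by
      simp [hz0, Complex.ofReal_eq_zero]; exact ne_of_gt ht0
    have habs2 : ‖(t:ℂ) * z‖ = t * r := by
      simp [hr, _root_.abs_of_pos ht0]
    have h1 := hd ((t:ℂ)*z)
      (hzball t (by rw [Set.uIcc_of_le (by norm_num)]; exact ⟨ht0.le, ht.2⟩)) htz
    rw [habs2] at h1
    calc ‖deriv p ((t:ℂ) * z) * z‖ = ‖deriv p ((t:ℂ)*z)‖ * r := by simp [hr]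
    _ ≤ (Real.exp (t * r) / β) * r := mul_le_mul_of_nonneg_right h1 (norm_nonneg z)
    _ = r * Real.exp (t * r) / β := by ring
  rw [← hftc, ← hGval]
  exact hbound

/-- if `β ≥ (e − 1)/(√2 − 1)` and `1 + β·z·p'(z) ≺ 1 + z e^z`,
then `p ≺ √(1 + z)` (principal branch). -/
theorem stmt_13 (p : ℂ → ℂ) (hp : AnalyticOn ℂ p (ball (0 : ℂ) 1)) (hp0 : p 0 = 1)
    (β : ℝ) (hβ : (Real.exp 1 - 1) / (Real.sqrt 2 - 1) ≤ β)
    (hsub : Subordinate (fun z => 1 + (β : ℂ) * z * deriv p z)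
      (fun z => 1 + z * Complex.exp z)) :
    Subordinate p (fun z => Complex.exp ((1 / 2 : ℂ) * Complex.log (1 + z))) := by
  obtain ⟨ω₀, hωa, hω0, hωmap, hωeq⟩ := hsub
  have hs2 : (1:ℝ) < Real.sqrt 2 := by
    nlinarith [Real.sq_sqrt (by norm_num : (0:ℝ) ≤ 2), Real.sqrt_nonneg 2]
  have hs2' : Real.sqrt 2 < 2 := by
    nlinarith [Real.sq_sqrt (by norm_num : (0:ℝ) ≤ 2), Real.sqrt_nonneg 2]
  have he1 : (1:ℝ) < Real.exp 1 := by
    have := Real.add_one_le_exp (1:ℝ); linarith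
  have hβ0 : (0:ℝ) < β :=
    lt_of_lt_of_le (div_pos (by linarith) (by linarith)) hβ
  have hpN : AnalyticOnNhd ℂ p (ball (0:ℂ) 1) :=
    (isOpen_ball.analyticOn_iff_analyticOnNhd).mp hp
  have hωN : AnalyticOnNhd ℂ ω₀ (ball (0:ℂ) 1) :=
    (isOpen_ball.analyticOn_iff_analyticOnNhd).mp hωa
  -- Schwarz lemma
  have hSch : ∀ w ∈ ball (0:ℂ) 1, ‖ω₀ w‖ ≤ ‖w‖ := by
    intro w hw
    exact Complex.norm_le_norm_of_mapsTo_ball_self hωN.differentiableOn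
      (fun x hx => ball_subset_closedBall (hωmap x hx)) hω0 (mem_ball_zero_iff.mp hw)
  -- derivative bound
  have hd : ∀ w ∈ ball (0:ℂ) 1, w ≠ 0 →
      ‖deriv p w‖ ≤ Real.exp (‖w‖) / β := by
    intro w hw hw0
    have heq := hωeq w hw
    simp only [add_right_inj] at heq
    have habs : β * ‖w‖ * ‖deriv p w‖
        = ‖ω₀ w‖ * ‖Complex.exp (ω₀ w)‖ := by
      have := congrArg (‖·‖) heq
      simpa [map_mul, Complex.norm_real, _root_.abs_of_pos hβ0, mul_assoc] using this
    have hexp : ‖Complex.exp (ω₀ w)‖ ≤ Real.exp (‖w‖) := by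
      rw [Complex.norm_exp]
      apply Real.exp_le_exp.mpr
      exact le_trans (le_trans (le_abs_self _) (Complex.abs_re_le_norm _)) (hSch w hw)
    have hchain : β * ‖w‖ * ‖deriv p w‖
        ≤ ‖w‖ * Real.exp (‖w‖) := by
      rw [habs]
      exact mul_le_mul (hSch w hw) hexp (norm_nonneg _) (norm_nonneg _)
    have hwpos : 0 < ‖w‖ := norm_pos_iff.mpr hw0
    rw [le_div_iff₀ hβ0]
    nlinarith [norm_nonneg (deriv p w), Real.exp_nonneg (‖w‖)]
  -- key estimate
  have key : ∀ z ∈ ball (0:ℂ) 1, ‖p z - 1‖ < Real.sqrt 2 - 1 := by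
    intro z hz
    have h1 := estimate_aux p hpN hp0 β hβ0 hd z hz
    have h2 : (Real.exp (‖z‖) - 1) / β < (Real.exp 1 - 1) / β := by
      gcongr
      exact mem_ball_zero_iff.mp hz
    have h3 : (Real.exp 1 - 1) / β ≤ Real.sqrt 2 - 1 := by
      rw [div_le_iff₀ hβ0]
      have := (div_le_iff₀ (by linarith : (0:ℝ) < Real.sqrt 2 - 1)).mp hβ
      linarith
    linarith
  -- positive real part
  have hre : ∀ z ∈ ball (0:ℂ) 1, 0 < (p z).re := by
    intro z hz
    have h1 := key z hz
    have h2 : -((p z - 1).re) ≤ ‖p z - 1‖ :=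
      le_trans (neg_le_abs _) (Complex.abs_re_le_norm _)
    have h3 : (p z - 1).re = (p z).re - 1 := by simp
    nlinarith
  refine ⟨fun z => (p z)^2 - 1, (hp.pow 2).sub analyticOn_const, by simp [hp0], ?_, ?_⟩
  · intro z hz
    rw [mem_ball_zero_iff]
    show ‖(p z)^2 - 1‖ < 1
    have h1 := key z hz
    have h2 : (p z)^2 - 1 = (p z - 1) * (p z + 1) := by ring
    have h3 : ‖p z + 1‖ ≤ ‖p z - 1‖ + 2 := by
      calc ‖p z + 1‖ = ‖(p z - 1) + 2‖ := by ring_nf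
      _ ≤ ‖p z - 1‖ + ‖2‖ := norm_add_le _ _
      _ = ‖p z - 1‖ + 2 := by norm_num
    rw [h2, norm_mul]
    have ha := norm_nonneg (p z - 1)
    have hb := norm_nonneg (p z + 1)
    have h4 : (Real.sqrt 2)^2 = 2 := Real.sq_sqrt (by norm_num)
    nlinarith
  · intro z hz
    have h1 : (1 : ℂ) + ((p z)^2 - 1) = (p z)^2 := by ring
    simp only [h1]
    exact (sqrt_sq_aux (p z) (hre z hz)).symm
end

section
/- Let p be analytic on 𝔻 with p(0) = 1 and p(z) ≠ 0 for all z ∈ 𝔻, and let β ≥ e − 1 be a real number. If the function z ↦ 1 + β·z·p'(z)/p(z) is subordinate to ℘(z) = 1 + z e^z, then p(z) is subordinate to e^z. -/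
open Complex Metric

open Set MeasureTheory intervalIntegral in
set_option maxHeartbeats 2000000 in
/-- if `β ≥ e − 1` and `1 + β·z·p'(z)/p(z) ≺ 1 + z e^z`,
then `p ≺ e^z`. -/
theorem stmt_14 (p : ℂ → ℂ) (hp : AnalyticOn ℂ p (ball (0 : ℂ) 1)) (hp0 : p 0 = 1)
    (hpne : ∀ z ∈ ball (0 : ℂ) 1, p z ≠ 0)
    (β : ℝ) (hβ : Real.exp 1 - 1 ≤ β)
    (hsub : Subordinate (fun z => 1 + (β : ℂ) * z * deriv p z / p z)
      (fun z => 1 + z * Complex.exp z)) :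
    Subordinate p (fun z => Complex.exp z) := by
  obtain ⟨ω, hωa, hω0, hωmaps, hωeq⟩ := hsub
  have hβpos : (0:ℝ) < β := lt_of_lt_of_le (by nlinarith [Real.add_one_le_exp (1:ℝ)]) hβ
  have hopen : IsOpen (ball (0:ℂ) 1) := isOpen_ball
  have hpN : AnalyticOnNhd ℂ p (ball (0:ℂ) 1) := hopen.analyticOn_iff_analyticOnNhd.mp hp
  have hωN : AnalyticOnNhd ℂ ω (ball (0:ℂ) 1) := hopen.analyticOn_iff_analyticOnNhd.mp hωa
  set g : ℂ → ℂ := fun z => deriv p z / p z with hg_def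
  have hgN : AnalyticOnNhd ℂ g (ball (0:ℂ) 1) := hpN.deriv.div hpN hpne
  have hgc : ContinuousOn g (ball (0:ℂ) 1) := hgN.continuousOn
  -- the key identity
  have hid : ∀ z ∈ ball (0:ℂ) 1, (β:ℂ) * z * g z = ω z * Complex.exp (ω z) := by
    intro z hz
    have := hωeq z hz
    simp only [] at this
    have h2 : (β:ℂ) * z * deriv p z / p z = ω z * Complex.exp (ω z) := by
      linear_combination this
    rw [← h2, hg_def, mul_div_assoc]
  -- Schwarz
  have hωle : ∀ z ∈ ball (0:ℂ) 1, ‖ω z‖ ≤ ‖z‖ := by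
    intro z hz
    exact Complex.norm_le_norm_of_mapsTo_ball (hωN.differentiableOn) (fun z hz => ball_subset_closedBall (hωmaps z hz)) hω0
      (by simpa [mem_ball, dist_eq_norm] using hz)
  -- bound on g away from 0
  have hgbd : ∀ w ∈ ball (0:ℂ) 1, w ≠ 0 → ‖g w‖ ≤ Real.exp ‖w‖ / β := by
    intro w hw hw0
    have h1 : β * (‖w‖ * ‖g w‖) = ‖ω w * Complex.exp (ω w)‖ := by
      have := congrArg (fun x : ℂ => ‖x‖) (hid w hw)
      simpa [norm_mul, Complex.norm_real, abs_of_pos hβpos, mul_assoc] using this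
    have h2 : ‖ω w * Complex.exp (ω w)‖ ≤ ‖w‖ * Real.exp ‖w‖ := by
      rw [norm_mul]
      have hle := hωle w hw
      have h3 : ‖Complex.exp (ω w)‖ ≤ Real.exp ‖w‖ := by
        calc ‖Complex.exp (ω w)‖ = Real.exp (ω w).re := Complex.norm_exp _
          _ ≤ Real.exp ‖w‖ := Real.exp_le_exp.mpr ((Complex.re_le_norm _).trans hle)
      exact mul_le_mul hle h3 (norm_nonneg _) (norm_nonneg _)
    have hwpos : (0:ℝ) < ‖w‖ := norm_pos_iff.mpr hw0
    rw [le_div_iff₀ hβpos]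
    nlinarith [h1 ▸ h2]
  -- the candidate subordinating function
  set q : ℂ → ℂ := fun z => ∫ t in (0:ℝ)..1, z * g ((t:ℂ) * z) with hq_def
  have hq0 : q 0 = 0 := by simp [hq_def]
  -- exp (q z) = p z
  have hexpq : ∀ z ∈ ball (0:ℂ) 1, Complex.exp (q z) = p z := by
    intro z hz
    have hznorm : ‖z‖ < 1 := by simpa [mem_ball, dist_eq_norm] using hz
    set c : ℝ → ℝ := fun t => max 0 (min t 1) with hc_def
    have hc_cont : Continuous c := continuous_const.max (continuous_id.min continuous_const)
    have hc_mem : ∀ t : ℝ, ((c t : ℂ) * z) ∈ ball (0:ℂ) 1 := by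
      intro t
      have h01 : 0 ≤ c t ∧ c t ≤ 1 := ⟨le_max_left _ _, max_le (by linarith [hznorm]; ) (min_le_right _ _)⟩
      rw [mem_ball, dist_eq_norm, sub_zero, norm_mul, Complex.norm_real, Real.norm_eq_abs,
        _root_.abs_of_nonneg h01.1]
      calc c t * ‖z‖ ≤ 1 * ‖z‖ := by nlinarith [norm_nonneg z, h01.2]
        _ < 1 := by simpa using hznorm
    set F : ℝ → ℂ := fun t => z * g ((c t : ℂ) * z) with hF_def
    have hFc : Continuous F := by
      apply continuous_const.mul
      exact hgc.comp_continuous (by continuity) hc_mem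
    set Q : ℝ → ℂ := fun u => ∫ t in (0:ℝ)..u, F t with hQ_def
    have hQd : ∀ t : ℝ, HasDerivAt Q (F t) t := by
      intro t
      exact integral_hasDerivAt_right (hFc.intervalIntegrable _ _)
        hFc.aestronglyMeasurable.stronglyMeasurableAtFilter hFc.continuousAt
    have hmem : ∀ t ∈ Icc (0:ℝ) 1, ((t:ℂ) * z) ∈ ball (0:ℂ) 1 := by
      intro t ht
      rw [mem_ball, dist_eq_norm, sub_zero, norm_mul, Complex.norm_real, Real.norm_eq_abs,
        _root_.abs_of_nonneg ht.1]
      calc t * ‖z‖ ≤ 1 * ‖z‖ := by nlinarith [norm_nonneg z, ht.2]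
        _ < 1 := by simpa using hznorm
    have hceq : ∀ t ∈ Icc (0:ℝ) 1, c t = t := by
      intro t ht; simp [hc_def, ht.1, ht.2, max_eq_right, min_eq_left]
    set h : ℝ → ℂ := fun t => p ((t:ℂ) * z) * Complex.exp (-Q t) with hh_def
    have hh : ∀ t ∈ Icc (0:ℝ) 1, HasDerivAt h 0 t := by
      intro t ht
      have hmemt := hmem t ht
      have hpd : HasDerivAt (fun s : ℝ => p ((s:ℂ) * z)) (deriv p ((t:ℂ) * z) * z) t := by
        have h1 : HasDerivAt p (deriv p ((t:ℂ)*z)) ((t:ℂ)*z) :=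
          (hpN _ hmemt).differentiableAt.hasDerivAt
        have h2 : HasDerivAt (fun w : ℂ => p (w * z)) (deriv p ((t:ℂ)*z) * z) (t:ℂ) := by
          exact (h1.comp (t:ℂ) ((hasDerivAt_id ((t:ℂ))).mul_const z)).congr_deriv (by simp)
        exact h2.comp_ofReal
      have hed : HasDerivAt (fun s : ℝ => Complex.exp (-Q s))
          (Complex.exp (-Q t) * (-F t)) t := ((hQd t).neg).cexp
      have := hpd.mul hed
      have hFt : F t = z * (deriv p ((t:ℂ)*z) / p ((t:ℂ)*z)) := by
        rw [hF_def]; simp only []; rw [hceq t ht]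
      have hne := hpne _ hmemt
      convert this using 1
      · rfl
      · rfl
      rw [hFt]
      field_simp
      ring
    have hcont : ContinuousOn h (Icc 0 1) := fun t ht => (hh t ht).continuousAt.continuousWithinAt
    have hconst := constant_of_has_deriv_right_zero hcont
      (fun t ht => ((hh t (Ico_subset_Icc_self ht)).hasDerivWithinAt)) 1 (right_mem_Icc.mpr zero_le_one)
    have hQ1 : Q 1 = q z := by
      rw [hQ_def, hq_def]
      apply intervalIntegral.integral_congr
      intro t ht
      rw [Set.uIcc_of_le zero_le_one] at ht
      simp only [hF_def, hceq t ht]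
    have hh1 : h 1 = p z * Complex.exp (-q z) := by simp [hh_def, hQ1]
    have hh0 : h 0 = 1 := by simp [hh_def, hQ_def, hp0]
    rw [hh1, hh0] at hconst
    have := hpne z hz
    field_simp [Complex.exp_neg] at hconst
    rw [← mul_one (Complex.exp (q z)), ← hconst, mul_left_comm, ← Complex.exp_add, add_neg_cancel,
      Complex.exp_zero, mul_one]
  -- the norm bound
  have hqlt : ∀ z ∈ ball (0:ℂ) 1, ‖q z‖ < 1 := by
    intro z hz
    have hznorm : ‖z‖ < 1 := by simpa [mem_ball, dist_eq_norm] using hz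
    rcases eq_or_ne z 0 with rfl | hz0
    · simpa [hq0] using one_pos
    have hzpos : (0:ℝ) < ‖z‖ := norm_pos_iff.mpr hz0
    have hbd : ‖q z‖ ≤ (Real.exp ‖z‖ - 1) / β := by
      have key : ‖∫ t in (0:ℝ)..1, z * g ((t:ℂ) * z)‖ ≤
          ∫ t in (0:ℝ)..1, ‖z‖ * Real.exp (t * ‖z‖) / β := by
        have habs : |∫ t in (0:ℝ)..1, ‖z‖ * Real.exp (t * ‖z‖) / β|
            = ∫ t in (0:ℝ)..1, ‖z‖ * Real.exp (t * ‖z‖) / β := by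
          apply _root_.abs_of_nonneg
          apply intervalIntegral.integral_nonneg zero_le_one
          intro u _; positivity
        apply intervalIntegral.norm_integral_le_of_norm_le zero_le_one
        · filter_upwards with t ht
          have htz : ((t:ℂ) * z) ∈ ball (0:ℂ) 1 := by
            rw [mem_ball, dist_eq_norm, sub_zero, norm_mul, Complex.norm_real,
              Real.norm_eq_abs, _root_.abs_of_nonneg ht.1.le]
            calc t * ‖z‖ ≤ 1 * ‖z‖ := mul_le_mul_of_nonneg_right ht.2 (norm_nonneg z)
              _ < 1 := by simpa using hznorm
          have htz0 : ((t:ℂ) * z) ≠ 0 := by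
            simp only [mul_ne_zero_iff]
            exact ⟨Complex.ofReal_ne_zero.mpr ht.1.ne', hz0⟩
          have := hgbd _ htz htz0
          rw [norm_mul]
          have hnorm : ‖(t:ℂ) * z‖ = t * ‖z‖ := by
            rw [norm_mul, Complex.norm_real, Real.norm_eq_abs, _root_.abs_of_nonneg ht.1.le]
          rw [hnorm] at this
          calc ‖z‖ * ‖g ((t:ℂ)*z)‖ ≤ ‖z‖ * (Real.exp (t * ‖z‖) / β) :=
                mul_le_mul_of_nonneg_left this (norm_nonneg z)
            _ = ‖z‖ * Real.exp (t * ‖z‖) / β := by ring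
        · apply Continuous.intervalIntegrable
          continuity
      have hint : ∫ t in (0:ℝ)..1, ‖z‖ * Real.exp (t * ‖z‖) / β
          = (Real.exp ‖z‖ - 1) / β := by
        have h1 : ∫ t in (0:ℝ)..1, Real.exp (t * ‖z‖)
            = ‖z‖⁻¹ * (Real.exp ‖z‖ - 1) := by
          rw [intervalIntegral.integral_comp_mul_right Real.exp hzpos.ne']
          simp [integral_exp, smul_eq_mul]
        calc ∫ t in (0:ℝ)..1, ‖z‖ * Real.exp (t * ‖z‖) / β
            = (‖z‖ / β) * ∫ t in (0:ℝ)..1, Real.exp (t * ‖z‖) := by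
              rw [← intervalIntegral.integral_const_mul]
              congr 1; funext t; ring
          _ = (Real.exp ‖z‖ - 1) / β := by
              rw [h1]
              have haux : ‖z‖ ≠ 0 := hzpos.ne'
              field_simp [haux, hβpos.ne']
      calc ‖q z‖ ≤ _ := key
        _ = (Real.exp ‖z‖ - 1) / β := hint
    have hstrict : (Real.exp ‖z‖ - 1) / β < 1 := by
      rw [div_lt_one hβpos]
      have := Real.exp_lt_exp.mpr hznorm
      linarith
    linarith
  -- analyticity of q
  have hqa : AnalyticOnNhd ℂ q (ball (0:ℂ) 1) := by
    intro z₀ hz₀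
    have hpz₀ := hpne z₀ hz₀
    set U : Set ℂ := ball (0:ℂ) 1 ∩ (fun z => p z / p z₀) ⁻¹' (ball (1:ℂ) (1/2)) with hU_def
    have hUopen : IsOpen U := by
      apply ContinuousOn.isOpen_inter_preimage _ hopen isOpen_ball
      exact hpN.continuousOn.div_const _
    have hz₀U : z₀ ∈ U := by
      refine ⟨hz₀, ?_⟩
      simp [div_self hpz₀]
    -- on U, q z = q z₀ + log (p z / p z₀)
    have hEq : EqOn q (fun z => q z₀ + Complex.log (p z / p z₀)) U := by
      intro z hzU
      obtain ⟨hzB, hzpre⟩ := hzU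
      set r : ℂ := p z / p z₀ with hr_def
      have hrnear : ‖r - 1‖ < 1/2 := by
        simpa [mem_ball, dist_eq_norm] using hzpre
      have hrre : (1:ℝ)/2 < r.re := by
        have := Complex.abs_re_le_norm (r - 1)
        simp only [Complex.sub_re, Complex.one_re] at this
        have h2 : |r.re - 1| < 1/2 := lt_of_le_of_lt this hrnear
        cases abs_lt.mp h2 with
        | intro h3 h4 => linarith
      have hrne : r ≠ 0 := by
        intro h; rw [h] at hrre; norm_num at hrre
      have hrslit : r ∈ Complex.slitPlane := Or.inl (by linarith)
      have hexp_eq : Complex.exp (q z - q z₀ - Complex.log r) = 1 := by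
        rw [Complex.exp_sub, Complex.exp_sub, Complex.exp_log hrne,
          hexpq z hzB, hexpq z₀ hz₀, hr_def]
        field_simp
        exact div_self (hpne z hzB)
      obtain ⟨n, hn⟩ := Complex.exp_eq_one_iff.mp hexp_eq
      have hrabs_lo : (1:ℝ)/2 < ‖r‖ := lt_of_lt_of_le hrre (Complex.re_le_norm r)
      have hrnear' : ‖r - 1‖ < 1/2 := hrnear
      have hrabs_hi : ‖r‖ < 3/2 := by
        calc ‖r‖ = ‖(r - 1) + 1‖ := by ring_nf
          _ ≤ ‖r-1‖ + ‖(1:ℂ)‖ := norm_add_le _ _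
          _ < 3/2 := by rw [norm_one]; linarith
      have hlog_bd : ‖Complex.log r‖ ≤ Real.log 2 + Real.pi := by
        calc ‖Complex.log r‖ ≤ |(Complex.log r).re| + |(Complex.log r).im| :=
              Complex.norm_le_abs_re_add_abs_im _
          _ ≤ Real.log 2 + Real.pi := by
            apply add_le_add
            · rw [Complex.log_re]
              rw [abs_le]
              constructor
              · have : Real.log (1/2) ≤ Real.log ‖r‖ :=
                  Real.log_le_log (by norm_num) hrabs_lo.le
                rw [Real.log_div one_ne_zero two_ne_zero, Real.log_one] at this
                linarith
              · have : Real.log ‖r‖ ≤ Real.log 2 :=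
                  Real.log_le_log (by positivity) (by linarith)
                linarith
            · rw [Complex.log_im]
              exact Complex.abs_arg_le_pi r
      have hnz : n = 0 := by
        by_contra hne
        have h1 : (1:ℝ) ≤ |(n:ℝ)| := by
          rw [← Int.cast_abs]
          exact_mod_cast Int.one_le_abs (by exact_mod_cast hne)
        have h2 : ‖(n:ℂ) * (2 * Real.pi * Complex.I)‖ = |(n:ℝ)| * (2 * Real.pi) := by
          rw [norm_mul]
          simp [_root_.abs_of_nonneg Real.pi_pos.le, Real.pi_pos.le, mul_assoc]
        have h3 : ‖q z - q z₀ - Complex.log r‖ < 2 + (Real.log 2 + Real.pi) := by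
          calc ‖q z - q z₀ - Complex.log r‖ ≤ ‖q z‖ + ‖q z₀‖ + ‖Complex.log r‖ := by
                calc ‖q z - q z₀ - Complex.log r‖ ≤ ‖q z - q z₀‖ + ‖Complex.log r‖ :=
                      norm_sub_le _ _
                  _ ≤ ‖q z‖ + ‖q z₀‖ + ‖Complex.log r‖ := by
                      have := norm_sub_le (q z) (q z₀); linarith
            _ < 2 + (Real.log 2 + Real.pi) := by
                have := hqlt z hzB; have := hqlt z₀ hz₀; linarith
        rw [hn, h2] at h3
        have hπ : Real.pi > 3.14 := by
          have := Real.pi_gt_d6; linarith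
        have hlog2 : Real.log 2 < 0.6931471808 := Real.log_two_lt_d9
        nlinarith
      rw [hnz] at hn
      simp only [Int.cast_zero, zero_mul] at hn
      have : q z = q z₀ + Complex.log r := by linear_combination hn
      exact this
    have hU_nhds : U ∈ nhds z₀ := hUopen.mem_nhds hz₀U
    have hrhs : AnalyticAt ℂ (fun z => q z₀ + Complex.log (p z / p z₀)) z₀ := by
      apply AnalyticAt.add analyticAt_const
      apply AnalyticAt.clog
      · exact (hpN z₀ hz₀).div analyticAt_const hpz₀
      · rw [div_self hpz₀]
        exact Or.inl (by norm_num)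
    exact hrhs.congr (Filter.eventuallyEq_of_mem hU_nhds (fun z hzU => (hEq hzU).symm))
  refine ⟨q, hqa.analyticOn, hq0, ?_, ?_⟩
  · intro z hz
    rw [mem_ball, dist_eq_norm, sub_zero]
    exact hqlt z hz
  · intro z hz
    exact (hexpq z hz).symm
end

section
/- Let p be analytic on 𝔻 with p(0) = 1 and p(z) ≠ 0 for all z ∈ 𝔻, and let β ≥ (e − 1)/(1 − 1/e) be a real number. If the function z ↦ 1 + β·z·p'(z)/p(z)² is subordinate to ℘(z) = 1 + z e^z, then p(z) is subordinate to e^z. -/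
open Complex Metric

lemma aux_norm_log_one_sub_le {u : ℂ} (hu : ‖u‖ < 1) :
    ‖Complex.log (1 - u)‖ ≤ -Real.log (1 - ‖u‖) := by
  have hc := Complex.hasSum_taylorSeries_neg_log hu
  have habs : |‖u‖| < 1 := by rwa [_root_.abs_of_nonneg (norm_nonneg u)]
  have hr0 := Real.hasSum_pow_div_log_of_abs_lt_one habs
  have hr : HasSum (fun n : ℕ => ‖u‖ ^ n / n) (-Real.log (1 - ‖u‖)) := by
    have h := (hasSum_nat_add_iff (f := fun n : ℕ => ‖u‖ ^ n / (n : ℝ))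
      (g := -Real.log (1 - ‖u‖)) 1).mp (by
        convert hr0 using 2 with n
        · rfl
        · push_cast; ring)
    simpa using h
  have hnorm : ∀ n : ℕ, ‖u ^ n / (n : ℂ)‖ = ‖u‖ ^ n / n := by
    intro n
    rw [norm_div, norm_pow, Complex.norm_natCast]
  calc ‖Complex.log (1 - u)‖ = ‖-Complex.log (1 - u)‖ := (norm_neg _).symm
    _ = ‖∑' n : ℕ, u ^ n / (n : ℂ)‖ := by rw [hc.tsum_eq]
    _ ≤ ∑' n : ℕ, ‖u ^ n / (n : ℂ)‖ := norm_tsum_le_tsum_norm (by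
        simp only [hnorm]; exact hr.summable)
    _ = -Real.log (1 - ‖u‖) := by simp only [hnorm]; exact hr.tsum_eq

/-- if `β ≥ (e − 1)/(1 − 1/e)` and `1 + β·z·p'(z)/p(z)² ≺ 1 + z e^z`,
then `p ≺ e^z`. -/
theorem stmt_15 (p : ℂ → ℂ) (hp : AnalyticOn ℂ p (ball (0 : ℂ) 1)) (hp0 : p 0 = 1)
    (hpne : ∀ z ∈ ball (0 : ℂ) 1, p z ≠ 0)
    (β : ℝ) (hβ : (Real.exp 1 - 1) / (1 - 1 / Real.exp 1) ≤ β)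
    (hsub : Subordinate (fun z => 1 + (β : ℂ) * z * deriv p z / (p z) ^ 2)
      (fun z => 1 + z * Complex.exp z)) :
    Subordinate p (fun z => Complex.exp z) := by
  obtain ⟨w, hwA, hw0, hwmap, hweq⟩ := hsub
  rw [isOpen_ball.analyticOn_iff_analyticOnNhd] at hwA hp
  have he1 : (1:ℝ) < Real.exp 1 := by
    have := Real.exp_one_gt_d9; linarith
  have hβe : Real.exp 1 ≤ β := by
    have hne : (1:ℝ) - 1 / Real.exp 1 ≠ 0 := by
      have h1 : 1 / Real.exp 1 < 1 := by
        rw [div_lt_one (Real.exp_pos 1)]; exact he1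
      linarith
    have key : (Real.exp 1 - 1) / (1 - 1 / Real.exp 1) = Real.exp 1 := by
      rw [div_eq_iff hne]
      field_simp
    linarith [hβ]
  have hβ0 : (0:ℝ) < β := lt_of_lt_of_le (Real.exp_pos 1) hβe
  -- Schwarz lemma
  have hschwarz : ∀ z ∈ ball (0:ℂ) 1, ‖w z‖ ≤ ‖z‖ := by
    intro z hz
    have := Complex.norm_le_norm_of_mapsTo_ball hwA.differentiableOn
      (fun x hx => ball_subset_closedBall (hwmap x hx)) hw0 (by
        exact mem_ball_zero_iff.mp hz)
    simpa using this
  -- derivative of 1 - 1/p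
  have hderiv : ∀ z ∈ ball (0:ℂ) 1,
      HasDerivAt (fun x => 1 - (p x)⁻¹) (deriv p z / (p z) ^ 2) z := by
    intro z hz
    have hd : HasDerivAt p (deriv p z) z := (hp z hz).differentiableAt.hasDerivAt
    have := (hd.inv (hpne z hz)).const_sub 1
    rw [show deriv p z / p z ^ 2 = -(-deriv p z / p z ^ 2) by ring]
    exact this
  -- quantitative bound
  have hbound : ∀ z ∈ ball (0:ℂ) 1, ‖1 - (p z)⁻¹‖ ≤ (Real.exp ‖z‖ - 1) / β := by
    intro z hz
    rcases eq_or_ne z 0 with rfl | hz0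
    · simp [hp0]
    have hz1 : ‖z‖ < 1 := mem_ball_zero_iff.mp hz
    have hmem : ∀ t : ℝ, t ∈ Set.Icc (0:ℝ) 1 → (t:ℂ) * z ∈ ball (0:ℂ) 1 := by
      intro t ht
      rw [mem_ball_zero_iff, norm_mul, Complex.norm_real, Real.norm_eq_abs,
        _root_.abs_of_nonneg ht.1]
      calc t * ‖z‖ ≤ 1 * ‖z‖ := by
            apply mul_le_mul_of_nonneg_right ht.2 (norm_nonneg z)
        _ < 1 := by rwa [one_mul]
    set φ' : ℝ → ℂ := fun t => z * (deriv p ((t:ℂ) * z) / (p ((t:ℂ) * z)) ^ 2)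
      with hφ'def
    have hft : ∀ t ∈ Set.uIcc (0:ℝ) 1,
        HasDerivAt (fun s : ℝ => 1 - (p ((s:ℂ) * z))⁻¹) (φ' t) t := by
      intro t ht
      rw [Set.uIcc_of_le zero_le_one] at ht
      have hc : HasDerivAt (fun s : ℝ => (s:ℂ) * z) z t := by
        simpa [Complex.real_smul] using (hasDerivAt_id t).smul_const z
      have hu := hderiv ((t:ℂ) * z) (hmem t ht)
      have := hu.scomp t hc
      simpa [smul_eq_mul, Function.comp_def, hφ'def] using this
    have hcont : ContinuousOn φ' (Set.uIcc (0:ℝ) 1) := by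
      rw [Set.uIcc_of_le zero_le_one]
      have hcs : ContinuousOn (fun t : ℝ => (t:ℂ) * z) (Set.Icc (0:ℝ) 1) :=
        (Complex.continuous_ofReal.mul continuous_const).continuousOn
      have h1 : ContinuousOn (deriv p) (ball (0:ℂ) 1) :=
        hp.deriv.continuousOn
      have h2 : ContinuousOn p (ball (0:ℂ) 1) := hp.continuousOn
      apply ContinuousOn.mul continuousOn_const
      apply ContinuousOn.div
      · exact h1.comp hcs hmem
      · exact ((h2.comp hcs hmem).pow 2)
      · intro t ht
        exact pow_ne_zero 2 (hpne _ (hmem t ht))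
    have hint : IntervalIntegrable φ' MeasureTheory.volume 0 1 := hcont.intervalIntegrable
    have hFTC := intervalIntegral.integral_eq_sub_of_hasDerivAt hft hint
    -- bound function
    have hg : ∀ t ∈ Set.uIcc (0:ℝ) 1,
        HasDerivAt (fun t : ℝ => Real.exp (t * ‖z‖) / β)
          (‖z‖ * Real.exp (t * ‖z‖) / β) t := by
      intro t _
      have h1 : HasDerivAt (fun t : ℝ => t * ‖z‖) ‖z‖ t := by
        simpa using (hasDerivAt_id t).mul_const ‖z‖
      have := (h1.exp).div_const β
      rw [show ‖z‖ * Real.exp (t * ‖z‖) / β = Real.exp (t * ‖z‖) * ‖z‖ / β by ring]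
      exact this
    have hgc : Continuous (fun t : ℝ => ‖z‖ * Real.exp (t * ‖z‖) / β) := by
      continuity
    have hgi : IntervalIntegrable (fun t : ℝ => ‖z‖ * Real.exp (t * ‖z‖) / β)
        MeasureTheory.volume 0 1 := hgc.intervalIntegrable 0 1
    have hInt2 := intervalIntegral.integral_eq_sub_of_hasDerivAt hg hgi
    -- a.e. bound
    have hb : ∀ᵐ t ∂(MeasureTheory.volume.restrict (Set.uIoc (0:ℝ) 1)),
        ‖φ' t‖ ≤ ‖z‖ * Real.exp (t * ‖z‖) / β := by
      refine (MeasureTheory.ae_restrict_mem measurableSet_uIoc).mono ?_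
      intro t ht
      rw [Set.uIoc_of_le zero_le_one] at ht
      obtain ⟨ht0, ht1⟩ := ht
      have hζmem : (t:ℂ) * z ∈ ball (0:ℂ) 1 := hmem t ⟨ht0.le, ht1⟩
      have hζ0 : (t:ℂ) * z ≠ 0 :=
        mul_ne_zero (by exact_mod_cast ne_of_gt ht0) hz0
      have hA : (β:ℂ) * ((t:ℂ) * z) * deriv p ((t:ℂ) * z) / (p ((t:ℂ) * z)) ^ 2
          = w ((t:ℂ) * z) * Complex.exp (w ((t:ℂ) * z)) := by
        have h := hweq ((t:ℂ) * z) hζmem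
        simp only at h
        linear_combination h
      have hφt : φ' t = w ((t:ℂ) * z) * Complex.exp (w ((t:ℂ) * z))
          / ((β : ℂ) * (t : ℂ)) := by
        rw [hφ'def]
        simp only
        rw [eq_div_iff (by
          apply mul_ne_zero
          · exact_mod_cast ne_of_gt hβ0
          · exact_mod_cast ne_of_gt ht0)]
        rw [← hA]
        ring
      rw [hφt, norm_div]
      have hwb : ‖w ((t:ℂ) * z)‖ ≤ t * ‖z‖ := by
        have h := hschwarz ((t:ℂ) * z) hζmem
        rwa [norm_mul, Complex.norm_real, Real.norm_eq_abs,
          _root_.abs_of_nonneg ht0.le] at h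
      have hexpb : ‖Complex.exp (w ((t:ℂ) * z))‖ ≤ Real.exp (t * ‖z‖) := by
        rw [Complex.norm_exp]
        exact Real.exp_le_exp.mpr ((Complex.re_le_norm _).trans hwb)
      have hden : ‖(β : ℂ) * (t : ℂ)‖ = β * t := by
        rw [norm_mul, Complex.norm_real, Complex.norm_real, Real.norm_eq_abs,
          Real.norm_eq_abs, _root_.abs_of_nonneg hβ0.le, _root_.abs_of_nonneg ht0.le]
      rw [hden, norm_mul]
      calc ‖w ((t:ℂ) * z)‖ * ‖Complex.exp (w ((t:ℂ) * z))‖ / (β * t)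
          ≤ (t * ‖z‖) * Real.exp (t * ‖z‖) / (β * t) := by
            gcongr
        _ = ‖z‖ * Real.exp (t * ‖z‖) / β := by
            rw [div_eq_div_iff (mul_pos hβ0 ht0).ne' hβ0.ne']
            ring
    have hval : (1 : ℂ) - (p z)⁻¹ = ∫ t in (0:ℝ)..1, φ' t := by
      rw [hFTC]
      simp [hp0]
    rw [hval]
    calc ‖∫ t in (0:ℝ)..1, φ' t‖
        ≤ |∫ t in (0:ℝ)..1, ‖z‖ * Real.exp (t * ‖z‖) / β| :=
          intervalIntegral.norm_integral_le_abs_of_norm_le hb hgi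
      _ = (Real.exp ‖z‖ - 1) / β := by
          rw [hInt2]
          simp only [one_mul, zero_mul, Real.exp_zero]
          rw [_root_.abs_of_nonneg (by
            rw [div_sub_div_same]
            apply div_nonneg _ hβ0.le
            have := Real.one_le_exp (norm_nonneg z)
            linarith)]
          ring
  -- strict bound
  have hkey : ∀ z ∈ ball (0:ℂ) 1, ‖1 - (p z)⁻¹‖ < 1 - 1 / Real.exp 1 := by
    intro z hz
    have h1 := hbound z hz
    have hz1 : ‖z‖ < 1 := mem_ball_zero_iff.mp hz
    have hez : Real.exp ‖z‖ < Real.exp 1 := Real.exp_lt_exp.mpr hz1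
    have hez1 : (1:ℝ) ≤ Real.exp ‖z‖ := Real.one_le_exp (norm_nonneg z)
    have hstep : (Real.exp ‖z‖ - 1) / β < (Real.exp 1 - 1) / Real.exp 1 := by
      rw [div_lt_div_iff₀ hβ0 (Real.exp_pos 1)]
      nlinarith [Real.exp_pos 1]
    have heq : (Real.exp 1 - 1) / Real.exp 1 = 1 - 1 / Real.exp 1 := by
      field_simp
    linarith
  -- construct the subordinating function
  have hslit : ∀ z ∈ ball (0:ℂ) 1, (p z)⁻¹ ∈ Complex.slitPlane := by
    intro z hz
    have h := hkey z hz
    have h2 : ‖(p z)⁻¹ - 1‖ < 1 := by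
      rw [norm_sub_rev]
      have : (0:ℝ) < 1 / Real.exp 1 := by positivity
      linarith
    have := Complex.mem_slitPlane_of_norm_lt_one h2
    rwa [add_sub_cancel] at this
  refine ⟨fun z => -Complex.log ((p z)⁻¹), ?_, ?_, ?_, ?_⟩
  · rw [isOpen_ball.analyticOn_iff_analyticOnNhd]
    intro z hz
    have hP : AnalyticAt ℂ (fun x => (p x)⁻¹) z := (hp z hz).inv (hpne z hz)
    have hQ := AnalyticAt.comp (g := Complex.log) (f := fun x => (p x)⁻¹)
      (x := z) (analyticAt_clog (hslit z hz)) hP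
    exact hQ.neg
  · simp [hp0]
  · intro z hz
    rw [mem_ball_zero_iff, norm_neg]
    have h := hkey z hz
    have h1e : (0:ℝ) < 1 / Real.exp 1 := by positivity
    have hu1 : ‖1 - (p z)⁻¹‖ < 1 := by linarith
    have hlog := aux_norm_log_one_sub_le hu1
    have hre : Complex.log ((p z)⁻¹) = Complex.log (1 - (1 - (p z)⁻¹)) := by
      norm_num
    rw [hre]
    refine lt_of_le_of_lt hlog ?_
    have hgt : Real.exp (-1) < 1 - ‖1 - (p z)⁻¹‖ := by
      rw [Real.exp_neg]
      have h2 : (Real.exp 1)⁻¹ = 1 / Real.exp 1 := (one_div _).symm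
      rw [h2]
      linarith
    have h3 := Real.log_lt_log (Real.exp_pos (-1)) hgt
    rw [Real.log_exp] at h3
    linarith
  · intro z hz
    simp only
    rw [Complex.exp_neg, Complex.exp_log (inv_ne_zero (hpne z hz)), inv_inv]
end

section
/- Let p be analytic on 𝔻 with p(0) = 1 and let β ≥ 2e(1 − log 2) be a real number. If the function z ↦ 1 + β·z·p'(z) is subordinate to √(1+z) = exp((1/2)·Log(1+z)) (principal branch), then p(z) is subordinate to ℘(z) = 1 + z e^z. -/
open Complex Metric Filter Topology

/-- bound on the principal square root: `‖√(1+w) - 1‖ ≤ |w|/(1+√(1-|w|))`. -/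
lemma sqrt_sub_one_bound (w : ℂ) (hw : ‖w‖ < 1) :
    ‖Complex.exp ((1 / 2 : ℂ) * Complex.log (1 + w)) - 1‖ ≤
      ‖w‖ / (1 + Real.sqrt (1 - ‖w‖)) := by
  set u : ℂ := 1 + w with hu
  have hu0 : u ≠ 0 := by
    intro h
    have : ‖w‖ = 1 := by
      have : w = -1 := by linear_combination h
      simp [this]
    linarith
  set s : ℂ := Complex.exp ((1 / 2 : ℂ) * Complex.log u) with hs
  have hsq : s * s = u := by
    rw [hs, ← Complex.exp_add]
    have : (1 / 2 : ℂ) * Complex.log u + (1 / 2 : ℂ) * Complex.log u = Complex.log u := by ring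
    rw [this, Complex.exp_log hu0]
  have hure : 0 < u.re := by
    have := Complex.abs_re_le_norm w
    simp only [hu, Complex.add_re, Complex.one_re]
    have : |w.re| < 1 := lt_of_le_of_lt this hw
    cases' abs_lt.1 this with h1 h2
    linarith
  -- real part of s is nonneg
  have hsre0 : 0 ≤ s.re := by
    rw [hs, Complex.exp_re]
    apply mul_nonneg (Real.exp_pos _).le
    apply Real.cos_nonneg_of_mem_Icc
    have harg : |Complex.arg u| < Real.pi / 2 :=
      Complex.abs_arg_lt_pi_div_two_iff.2 (Or.inl hure)
    have him : ((1 / 2 : ℂ) * Complex.log u).im = Complex.arg u / 2 := by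
      simp [Complex.log_im, Complex.mul_im, Complex.log_re]
      ring
    rw [him]
    constructor
    · cases' abs_lt.1 harg with h1 h2; linarith [Real.pi_pos]
    · cases' abs_lt.1 harg with h1 h2; linarith [Real.pi_pos]
  -- s.re^2 ≥ 1 - |w|
  have hsre2 : 1 - ‖w‖ ≤ s.re ^ 2 := by
    have habs : ‖s‖ ^ 2 = ‖u‖ := by
      rw [sq, ← norm_mul, hsq]
    have h1 : s.re ^ 2 - s.im ^ 2 = u.re := by
      have := congrArg Complex.re hsq
      simp [Complex.mul_re] at this
      nlinarith [this]
    have h2 : s.re ^ 2 + s.im ^ 2 = ‖u‖ := by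
      rw [← habs, Complex.sq_norm, Complex.normSq_apply]; ring
    have hub : 1 - ‖w‖ ≤ ‖u‖ := by
      have := norm_add_le (1 + w) (-w)
      simp at this
      calc 1 - ‖w‖ ≤ ‖u‖ + ‖w‖ - ‖w‖ := by
            rw [hu]; nlinarith [this]
        _ = ‖u‖ := by ring
    have hub2 : 1 - ‖w‖ ≤ u.re := by
      have := Complex.abs_re_le_norm w
      have h3 : -w.re ≤ ‖w‖ := by cases' abs_le.1 this with a b; linarith
      simp only [hu, Complex.add_re, Complex.one_re]; linarith
    nlinarith
  have hsre : Real.sqrt (1 - ‖w‖) ≤ s.re := by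
    have := Real.sqrt_le_sqrt hsre2
    rwa [Real.sqrt_sq hsre0] at this
  -- |s+1| ≥ 1 + sqrt(1-|w|)
  have hdenom : 1 + Real.sqrt (1 - ‖w‖) ≤ ‖s + 1‖ := by
    have := Complex.re_le_norm (s + 1)
    simp only [Complex.add_re, Complex.one_re] at this
    linarith
  have hdpos : 0 < 1 + Real.sqrt (1 - ‖w‖) := by positivity
  have hs1 : (s - 1) * (s + 1) = w := by
    have : s * s = 1 + w := hsq
    linear_combination this
  have hprod : ‖s - 1‖ * ‖s + 1‖ = ‖w‖ := by
    rw [← norm_mul, hs1]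
  rw [show ‖s - 1‖ = ‖s - 1‖ from rfl, le_div_iff₀ hdpos]
  nlinarith [norm_nonneg (s - 1), norm_nonneg (s + 1)]

noncomputable def lamSeq (q : ℂ → ℂ) : ℕ → ℂ → ℂ
  | 0 => fun _ => 0
  | n + 1 => fun z => q z * Complex.exp (-(lamSeq q n z))

lemma expLip {x y : ℂ} (hx : ‖x‖ ≤ 1) (hy : ‖y‖ ≤ 1) :
    ‖Complex.exp x - Complex.exp y‖ ≤ Real.exp 1 * ‖x - y‖ := by
  have := Convex.norm_image_sub_le_of_norm_deriv_le (f := Complex.exp)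
    (s := closedBall (0 : ℂ) 1) (C := Real.exp 1)
    (fun u _ => (Complex.hasDerivAt_exp u).differentiableAt)
    (fun u hu => by
      rw [Complex.deriv_exp, Complex.norm_exp]
      exact Real.exp_le_exp.2 (le_trans (le_trans (le_abs_self _) (Complex.abs_re_le_norm u))
        (by simpa using mem_closedBall_zero_iff.1 hu)))
    (convex_closedBall _ _) (mem_closedBall_zero_iff.2 hy) (mem_closedBall_zero_iff.2 hx)
  exact this

lemma lamSeq_norm_le {q : ℂ → ℂ} {z : ℂ} (h : ‖q z‖ * Real.exp 1 ≤ 1) (n : ℕ) :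
    ‖lamSeq q n z‖ ≤ Real.exp 1 * ‖q z‖ := by
  induction n with
  | zero => simp [lamSeq]; positivity
  | succ n ih =>
    have h1 : ‖lamSeq q (n + 1) z‖ = ‖q z‖ * Real.exp (-(lamSeq q n z)).re := by
      show ‖q z * Complex.exp (-(lamSeq q n z))‖ = _
      rw [norm_mul, Complex.norm_exp]
    rw [h1]
    have h2 : (-(lamSeq q n z)).re ≤ 1 := by
      have := Complex.abs_re_le_norm (-(lamSeq q n z))
      have h3 : ‖-(lamSeq q n z)‖ = ‖lamSeq q n z‖ := by
        simp
      have h4 : ‖lamSeq q n z‖ ≤ 1 := le_trans ih (by nlinarith [norm_nonneg (q z), Real.exp_pos 1])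
      nlinarith [abs_le.1 this]
    calc ‖q z‖ * Real.exp (-(lamSeq q n z)).re ≤ ‖q z‖ * Real.exp 1 := by
          exact mul_le_mul_of_nonneg_left (Real.exp_le_exp.2 h2) (norm_nonneg _)
      _ = Real.exp 1 * ‖q z‖ := mul_comm _ _

lemma lamSeq_diff_le {q : ℂ → ℂ} {z : ℂ} (h : ‖q z‖ * Real.exp 1 ≤ 1) (n : ℕ) :
    ‖lamSeq q (n + 1) z - lamSeq q n z‖ ≤ ‖q z‖ * (Real.exp 1 * ‖q z‖) ^ n := by
  induction n with
  | zero => simp [lamSeq]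
  | succ n ih =>
    have hb : ∀ m, ‖-(lamSeq q m z)‖ ≤ 1 := by
      intro m
      rw [norm_neg]
      exact le_trans (lamSeq_norm_le h m) (by nlinarith [norm_nonneg (q z), Real.exp_pos 1])
    have h1 : lamSeq q (n + 2) z - lamSeq q (n + 1) z
        = q z * (Complex.exp (-(lamSeq q (n + 1) z)) - Complex.exp (-(lamSeq q n z))) := by
      simp [lamSeq]; ring
    rw [h1, norm_mul]
    have h2 : ‖Complex.exp (-(lamSeq q (n + 1) z)) - Complex.exp (-(lamSeq q n z))‖
        ≤ Real.exp 1 * ‖lamSeq q (n + 1) z - lamSeq q n z‖ := by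
      have := expLip (hb (n + 1)) (hb n)
      have h3 : -lamSeq q (n + 1) z - -lamSeq q n z = -(lamSeq q (n + 1) z - lamSeq q n z) := by ring
      rwa [h3, norm_neg] at this
    calc ‖q z‖ * ‖Complex.exp (-(lamSeq q (n + 1) z)) - Complex.exp (-(lamSeq q n z))‖
        ≤ ‖q z‖ * (Real.exp 1 * (‖q z‖ * (Real.exp 1 * ‖q z‖) ^ n)) := by
          refine mul_le_mul_of_nonneg_left (h2.trans ?_) (norm_nonneg _)
          exact mul_le_mul_of_nonneg_left ih (Real.exp_pos 1).le
      _ = ‖q z‖ * (Real.exp 1 * ‖q z‖) ^ (n + 1) := by ring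

lemma lamSeq_diffOn {q : ℂ → ℂ} {s : Set ℂ} (hq : DifferentiableOn ℂ q s) (n : ℕ) :
    DifferentiableOn ℂ (lamSeq q n) s := by
  induction n with
  | zero => exact differentiableOn_const 0
  | succ n ih =>
    exact hq.mul ((Complex.differentiable_exp.comp_differentiableOn) ih.neg)

lemma lambert_exists (q : ℂ → ℂ) (hq : AnalyticOn ℂ q (ball (0 : ℂ) 1)) (hq0 : q 0 = 0)
    (hqb : ∀ z ∈ ball (0 : ℂ) 1, ‖q z‖ < Real.exp (-1)) :
    ∃ ω : ℂ → ℂ, AnalyticOn ℂ ω (ball (0 : ℂ) 1) ∧ ω 0 = 0 ∧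
      (∀ z ∈ ball (0 : ℂ) 1, ω z ∈ ball (0 : ℂ) 1) ∧
      ∀ z ∈ ball (0 : ℂ) 1, ω z * Complex.exp (ω z) = q z := by
  have hee : Real.exp (-1) * Real.exp 1 = 1 := by
    rw [← Real.exp_add]; simp
  have hkey : ∀ z ∈ ball (0 : ℂ) 1, ‖q z‖ * Real.exp 1 < 1 := by
    intro z hz
    have := hqb z hz
    nlinarith [Real.exp_pos 1]
  have hcauchy : ∀ z ∈ ball (0 : ℂ) 1, CauchySeq (fun n => lamSeq q n z) := by
    intro z hz
    apply cauchySeq_of_le_geometric (Real.exp 1 * ‖q z‖) ‖q z‖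
      (by rw [mul_comm]; exact hkey z hz)
    intro n
    rw [dist_eq_norm, norm_sub_rev]
    exact lamSeq_diff_le (hkey z hz).le n
  set ω : ℂ → ℂ := fun z => limUnder atTop (fun n => lamSeq q n z) with hω
  have htend : ∀ z ∈ ball (0 : ℂ) 1, Tendsto (fun n => lamSeq q n z) atTop (𝓝 (ω z)) :=
    fun z hz => (hcauchy z hz).tendsto_limUnder
  have hzero : ∀ n, lamSeq q n 0 = 0 := by
    intro n; induction n with
    | zero => rfl
    | succ n ih => show q 0 * _ = 0; simp [hq0]
  have h0mem : (0 : ℂ) ∈ ball (0 : ℂ) 1 := by simp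
  have hω0 : ω 0 = 0 := by
    have h1 := htend 0 h0mem
    have h2 : Tendsto (fun n => lamSeq q n 0) atTop (𝓝 0) := by
      simp only [hzero]; exact tendsto_const_nhds
    exact tendsto_nhds_unique h1 h2
  have hbound : ∀ z ∈ ball (0 : ℂ) 1, ‖ω z‖ ≤ Real.exp 1 * ‖q z‖ := by
    intro z hz
    exact le_of_tendsto' (htend z hz).norm (fun n => lamSeq_norm_le (hkey z hz).le n)
  have hmaps : ∀ z ∈ ball (0 : ℂ) 1, ω z ∈ ball (0 : ℂ) 1 := by
    intro z hz
    rw [mem_ball_zero_iff]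
    calc ‖ω z‖ ≤ Real.exp 1 * ‖q z‖ := hbound z hz
      _ < Real.exp 1 * Real.exp (-1) := by
          exact mul_lt_mul_of_pos_left (hqb z hz) (Real.exp_pos 1)
      _ = 1 := by rw [mul_comm]; exact hee
  have heq : ∀ z ∈ ball (0 : ℂ) 1, ω z = q z * Complex.exp (-(ω z)) := by
    intro z hz
    have h1 : Tendsto (fun n => lamSeq q (n + 1) z) atTop (𝓝 (ω z)) :=
      (htend z hz).comp (tendsto_add_atTop_nat 1)
    have h2 : Tendsto (fun n => q z * Complex.exp (-(lamSeq q n z))) atTop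
        (𝓝 (q z * Complex.exp (-(ω z)))) := by
      exact Tendsto.const_mul _ ((Complex.continuous_exp.tendsto _).comp (htend z hz).neg)
    exact tendsto_nhds_unique h1 h2
  have hfix : ∀ z ∈ ball (0 : ℂ) 1, ω z * Complex.exp (ω z) = q z := by
    intro z hz
    nth_rewrite 1 [heq z hz]
    rw [mul_assoc, ← Complex.exp_add]
    simp
  -- analyticity
  have hqd : DifferentiableOn ℂ q (ball (0 : ℂ) 1) :=
    ((analyticOn_iff_differentiableOn isOpen_ball).1 hq)
  have htlu : TendstoLocallyUniformlyOn (lamSeq q) ω atTop (ball (0 : ℂ) 1) := by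
    rw [Metric.tendstoLocallyUniformlyOn_iff]
    intro ε hε x hx
    set c : ℝ := (‖q x‖ + Real.exp (-1)) / 2 with hc
    have hc1 : ‖q x‖ < c := by have := hqb x hx; rw [hc]; linarith
    have hc2 : c < Real.exp (-1) := by have := hqb x hx; rw [hc]; linarith
    have hc0 : 0 ≤ c := le_trans (norm_nonneg _) hc1.le
    have hec : Real.exp 1 * c < 1 := by nlinarith [Real.exp_pos 1]
    have hec0 : 0 ≤ Real.exp 1 * c := by positivity
    -- the neighborhood
    have hmem : (ball (0 : ℂ) 1 ∩ q ⁻¹' {w | ‖w‖ < c}) ∈ 𝓝[ball (0 : ℂ) 1] x := by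
      refine Filter.inter_mem self_mem_nhdsWithin ?_
      have hpre := (hq.continuousOn x hx) (Metric.isOpen_ball.mem_nhds (by
        simpa [mem_ball_zero_iff] using hc1) : Metric.ball (0 : ℂ) c ∈ 𝓝 (q x))
      refine Filter.mem_of_superset hpre ?_
      intro z hzpre
      simpa [mem_ball_zero_iff] using hzpre
    refine ⟨_, hmem, ?_⟩
    have hlim : Tendsto (fun n : ℕ => c * (Real.exp 1 * c) ^ n / (1 - Real.exp 1 * c))
        atTop (𝓝 0) := by
      have := tendsto_pow_atTop_nhds_zero_of_lt_one hec0 hec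
      have h2 := (this.const_mul c).div_const (1 - Real.exp 1 * c)
      simpa using h2
    filter_upwards [hlim.eventually (gt_mem_nhds hε)] with n hn z hzt
    obtain ⟨hz1, hz2⟩ := hzt
    have hz2' : ‖q z‖ ≤ c := le_of_lt hz2
    have hdistle : dist (lamSeq q n z) (ω z) ≤ c * (Real.exp 1 * c) ^ n / (1 - Real.exp 1 * c) := by
      apply dist_le_of_le_geometric_of_tendsto (Real.exp 1 * c) c hec _ (htend z hz1)
      intro m
      rw [dist_eq_norm, norm_sub_rev]
      calc ‖lamSeq q (m + 1) z - lamSeq q m z‖ ≤ ‖q z‖ * (Real.exp 1 * ‖q z‖) ^ m :=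
            lamSeq_diff_le (hkey z hz1).le m
        _ ≤ c * (Real.exp 1 * c) ^ m := by
            apply mul_le_mul hz2' _ (by positivity) hc0
            exact pow_le_pow_left₀ (by positivity)
              (mul_le_mul_of_nonneg_left hz2' (Real.exp_pos 1).le) m
    calc dist (ω z) (lamSeq q n z) = dist (lamSeq q n z) (ω z) := dist_comm _ _
      _ ≤ c * (Real.exp 1 * c) ^ n / (1 - Real.exp 1 * c) := hdistle
      _ < ε := hn
  have hωd : DifferentiableOn ℂ ω (ball (0 : ℂ) 1) :=
    htlu.differentiableOn (Eventually.of_forall (fun n => lamSeq_diffOn hqd n)) isOpen_ball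
  exact ⟨ω, hωd.analyticOn isOpen_ball, hω0, hmaps, hfix⟩

set_option maxHeartbeats 2000000 in
/-- if `β ≥ 2e(1 − log 2)` and `1 + β·z·p'(z) ≺ √(1 + z)`
(principal branch), then `p ≺ 1 + z e^z`. -/
theorem stmt_16 (p : ℂ → ℂ) (hp : AnalyticOn ℂ p (ball (0 : ℂ) 1)) (hp0 : p 0 = 1)
    (β : ℝ) (hβ : 2 * Real.exp 1 * (1 - Real.log 2) ≤ β)
    (hsub : Subordinate (fun z => 1 + (β : ℂ) * z * deriv p z)
      (fun z => Complex.exp ((1 / 2 : ℂ) * Complex.log (1 + z)))) :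
    Subordinate p (fun z => 1 + z * Complex.exp z) := by
  obtain ⟨ω₁, hω₁a, hω₁0, hω₁m, hω₁eq⟩ := hsub
  have hlog2 : Real.log 2 < 1 := by
    have := Real.log_two_lt_d9; linarith
  have hβ0 : (0 : ℝ) < β := by nlinarith [Real.exp_pos 1]
  have hω₁d : DifferentiableOn ℂ ω₁ (ball 0 1) :=
    (analyticOn_iff_differentiableOn isOpen_ball).1 hω₁a
  have hschwarz : ∀ z ∈ ball (0 : ℂ) 1, ‖ω₁ z‖ ≤ ‖z‖ := fun z hz =>
    Complex.norm_le_norm_of_mapsTo_ball hω₁d (fun w hw => ball_subset_closedBall (hω₁m w hw)) hω₁0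
      (mem_ball_zero_iff.1 hz)
  -- derivative bound
  have hderiv : ∀ z ∈ ball (0 : ℂ) 1, z ≠ 0 →
      ‖deriv p z‖ ≤ 1 / (β * (1 + Real.sqrt (1 - ‖z‖))) := by
    intro z hz hz0
    have heq := hω₁eq z hz
    simp only at heq
    have h2 : (β : ℂ) * z * deriv p z
        = Complex.exp ((1 / 2 : ℂ) * Complex.log (1 + ω₁ z)) - 1 := by
      linear_combination heq
    have hwlt : ‖ω₁ z‖ < 1 := mem_ball_zero_iff.1 (hω₁m z hz)
    have hzlt : ‖z‖ < 1 := mem_ball_zero_iff.1 hz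
    have hb := sqrt_sub_one_bound (ω₁ z) hwlt
    rw [← h2] at hb
    have h3 : ‖(β : ℂ) * z * deriv p z‖ = β * (‖z‖ * ‖deriv p z‖) := by
      simp only [norm_mul, Complex.norm_real, Real.norm_eq_abs, abs_of_pos hβ0]
      ring
    rw [h3] at hb
    have hmono : ‖ω₁ z‖ / (1 + Real.sqrt (1 - ‖ω₁ z‖))
        ≤ ‖z‖ / (1 + Real.sqrt (1 - ‖z‖)) := by
      apply div_le_div₀ (norm_nonneg z) (hschwarz z hz) (by positivity)
      have : Real.sqrt (1 - ‖z‖) ≤ Real.sqrt (1 - ‖ω₁ z‖) :=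
        Real.sqrt_le_sqrt (by linarith [hschwarz z hz])
      linarith
    have hball := hb.trans hmono
    have hzpos : 0 < ‖z‖ := norm_pos_iff.2 hz0
    have hden : (0 : ℝ) < 1 + Real.sqrt (1 - ‖z‖) := by positivity
    have hkey : β * (‖z‖ * ‖deriv p z‖) * (1 + Real.sqrt (1 - ‖z‖))
        ≤ ‖z‖ := by
      rw [← le_div_iff₀ hden]; exact hball
    rw [le_div_iff₀ (by positivity)]
    nlinarith [norm_nonneg (deriv p z), Real.sqrt_nonneg (1 - ‖z‖)]
  -- continuity of deriv p
  have hpd : DifferentiableOn ℂ p (ball (0 : ℂ) 1) :=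
    (analyticOn_iff_differentiableOn isOpen_ball).1 hp
  have hpdc : ContinuousOn (deriv p) (ball (0 : ℂ) 1) :=
    ((analyticOnNhd_iff_differentiableOn isOpen_ball).2 hpd).deriv.continuousOn
  -- main estimate
  have hmain : ∀ z ∈ ball (0 : ℂ) 1, ‖p z - 1‖ < Real.exp (-1) := by
    intro z hz
    rcases eq_or_ne z 0 with rfl | hz0
    · rw [hp0]; simp; positivity
    set r : ℝ := ‖z‖ with hr
    have hr0 : 0 < r := norm_pos_iff.2 hz0
    have hr1 : r < 1 := mem_ball_zero_iff.1 hz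
    have hseg : ∀ t : ℝ, t ∈ Set.uIcc (0 : ℝ) 1 → ((t : ℂ) * z) ∈ ball (0 : ℂ) 1 := by
      intro t ht
      rw [Set.uIcc_of_le (by norm_num : (0:ℝ) ≤ 1)] at ht
      rw [mem_ball_zero_iff]
      simp only [norm_mul, Complex.norm_real, Real.norm_eq_abs]
      rw [_root_.abs_of_nonneg ht.1]
      nlinarith [ht.2]
    have hderivt : ∀ t ∈ Set.uIcc (0 : ℝ) 1,
        HasDerivAt (fun t : ℝ => p ((t : ℂ) * z)) (deriv p ((t : ℂ) * z) * z) t := by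
      intro t ht
      have hpa : DifferentiableAt ℂ p ((t : ℂ) * z) :=
        hpd.differentiableAt (isOpen_ball.mem_nhds (hseg t ht))
      have h1 : HasDerivAt (fun u : ℂ => p (u * z)) (deriv p ((t : ℂ) * z) * z) (t : ℂ) := by
        have := HasDerivAt.comp (t : ℂ) hpa.hasDerivAt ((hasDerivAt_id (t : ℂ)).mul_const z)
        simpa [Function.comp_def] using this
      exact h1.comp_ofReal
    have hcint : IntervalIntegrable (fun t : ℝ => deriv p ((t : ℂ) * z) * z)
        MeasureTheory.volume 0 1 := by
      apply ContinuousOn.intervalIntegrable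
      apply ContinuousOn.mul _ continuousOn_const
      apply hpdc.comp
      · exact (Continuous.continuousOn (by continuity))
      · intro t ht; exact hseg t ht
    have hFTC : ∫ t in (0 : ℝ)..1, deriv p ((t : ℂ) * z) * z = p z - 1 := by
      have := intervalIntegral.integral_eq_sub_of_hasDerivAt hderivt hcint
      simpa [hp0] using this
    -- the dominating function
    set g : ℝ → ℝ := fun t => r / (β * (1 + Real.sqrt (1 - t * r))) with hg
    have hgcont : ContinuousOn g (Set.uIcc (0 : ℝ) 1) := by
      apply ContinuousOn.div continuousOn_const
      · apply Continuous.continuousOn; continuity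
      · intro t ht
        have : (0:ℝ) < β * (1 + Real.sqrt (1 - t * r)) := by positivity
        exact ne_of_gt this
    have hgint : IntervalIntegrable g MeasureTheory.volume 0 1 :=
      hgcont.intervalIntegrable
    have hboundae : ∀ t ∈ Set.uIoc (0 : ℝ) 1, ‖deriv p ((t : ℂ) * z) * z‖ ≤ g t := by
      intro t ht
      rw [Set.uIoc_of_le (by norm_num : (0:ℝ) ≤ 1)] at ht
      have ht0 : 0 < t := ht.1
      have ht1 : t ≤ 1 := ht.2
      have htz : ((t : ℂ) * z) ∈ ball (0 : ℂ) 1 := by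
        rw [mem_ball_zero_iff]
        simp only [norm_mul, Complex.norm_real, Real.norm_eq_abs, _root_.abs_of_pos ht0]
        nlinarith
      have htzne : ((t : ℂ) * z) ≠ 0 := by
        apply mul_ne_zero _ hz0
        exact_mod_cast ne_of_gt ht0
      have habs : ‖(t : ℂ) * z‖ = t * r := by
        simp [_root_.abs_of_pos ht0, hr]
      have hb := hderiv _ htz htzne
      rw [habs] at hb
      rw [norm_mul, hg]
      calc ‖deriv p ((t : ℂ) * z)‖ * ‖z‖
          ≤ (1 / (β * (1 + Real.sqrt (1 - t * r)))) * r := by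
            apply mul_le_mul_of_nonneg_right hb (norm_nonneg z)
        _ = r / (β * (1 + Real.sqrt (1 - t * r))) := by ring
    have hnormle : ‖p z - 1‖ ≤ |∫ t in (0 : ℝ)..1, g t| := by
      rw [← hFTC]
      apply intervalIntegral.norm_integral_le_abs_of_norm_le _ hgint
      exact MeasureTheory.ae_restrict_of_forall_mem measurableSet_uIoc hboundae
    -- compute the integral of g
    set s : ℝ := Real.sqrt (1 - r) with hsdef
    have hs0 : 0 < s := Real.sqrt_pos.2 (by linarith)
    have hs1 : s ≤ 1 := by
      have h := Real.sqrt_le_sqrt (show 1 - r ≤ 1 by linarith)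
      rw [Real.sqrt_one] at h
      exact h
    have hGderiv : ∀ t ∈ Set.uIcc (0 : ℝ) 1,
        HasDerivAt (fun t : ℝ =>
          (2 * Real.log (1 + Real.sqrt (1 - t * r)) - 2 * Real.sqrt (1 - t * r)) / β)
          (g t) t := by
      intro t ht
      rw [Set.uIcc_of_le (by norm_num : (0:ℝ) ≤ 1)] at ht
      have hx : 0 < 1 - t * r := by nlinarith [ht.1, ht.2]
      set u : ℝ := Real.sqrt (1 - t * r) with hu
      have hu0 : 0 < u := Real.sqrt_pos.2 hx
      have husq : u ^ 2 = 1 - t * r := Real.sq_sqrt hx.le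
      have h1 : HasDerivAt (fun t : ℝ => 1 - t * r) (-r) t := by
        simpa using ((hasDerivAt_id t).mul_const r).const_sub 1
      have h2 : HasDerivAt (fun t : ℝ => Real.sqrt (1 - t * r)) (1 / (2 * u) * (-r)) t :=
        (Real.hasDerivAt_sqrt (ne_of_gt hx)).comp t h1
      have h3 : HasDerivAt (fun t : ℝ => Real.log (1 + Real.sqrt (1 - t * r)))
          ((1 + u)⁻¹ * (1 / (2 * u) * (-r))) t := by
        have hne : (1 : ℝ) + u ≠ 0 := by positivity
        exact (Real.hasDerivAt_log hne).comp t (h2.const_add 1)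
      have h4 := ((h3.const_mul 2).sub (h2.const_mul 2)).div_const β
      have hval : (2 * ((1 + u)⁻¹ * (1 / (2 * u) * (-r))) - 2 * (1 / (2 * u) * (-r))) / β
          = g t := by
        simp only [hg]
        rw [← hu]
        have hβne : β ≠ 0 := ne_of_gt hβ0
        have hune : u ≠ 0 := ne_of_gt hu0
        have h1une : (1 : ℝ) + u ≠ 0 := by positivity
        field_simp
        ring
      rw [← hval]
      exact h4
    have hintval : ∫ t in (0 : ℝ)..1, g t
        = ((2 * Real.log (1 + s) - 2 * s) - (2 * Real.log 2 - 2)) / β := by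
      rw [intervalIntegral.integral_eq_sub_of_hasDerivAt hGderiv hgint]
      norm_num [hsdef, Real.sqrt_one]
      ring
    -- final numeric estimate
    set N : ℝ := (2 * Real.log (1 + s) - 2 * s) - (2 * Real.log 2 - 2) with hN
    have hlogub : Real.log (1 + s) < s :=
      lt_of_lt_of_le (Real.log_lt_sub_one_of_pos (by positivity) (by nlinarith)) (by linarith)
    have hNub : N < 2 - 2 * Real.log 2 := by rw [hN]; nlinarith
    have hNlb : 0 ≤ N := by
      have hlb : (1:ℝ) - ((1 + s)/2)⁻¹ ≤ Real.log ((1 + s)/2) :=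
        Real.one_sub_inv_le_log_of_pos (by positivity)
      have hlogdiv : Real.log ((1 + s)/2) = Real.log (1 + s) - Real.log 2 := by
        rw [Real.log_div (by positivity) (by norm_num)]
      rw [hlogdiv] at hlb
      have hinv : ((1 + s)/2)⁻¹ = 2 / (1 + s) := by field_simp
      rw [hinv] at hlb
      have h5 : 1 - 2 / (1 + s) = (s - 1) / (1 + s) := by field_simp; ring
      rw [h5] at hlb
      have h6 : (s - 1) / (1 + s) ≥ s - 1 := by
        rw [ge_iff_le, le_div_iff₀ (by positivity : (0:ℝ) < 1 + s)]
        nlinarith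
      rw [hN]; nlinarith
    have hfinal : N / β < Real.exp (-1) := by
      rw [div_lt_iff₀ hβ0]
      have hexp : Real.exp (-1) * Real.exp 1 = 1 := by rw [← Real.exp_add]; simp
      nlinarith [Real.exp_pos (-1), Real.exp_pos 1,
        mul_le_mul_of_nonneg_left hβ (Real.exp_pos (-1)).le]
    calc ‖p z - 1‖ ≤ |∫ t in (0 : ℝ)..1, g t| := hnormle
      _ = N / β := by rw [hintval, _root_.abs_of_nonneg (div_nonneg hNlb hβ0.le)]
      _ < Real.exp (-1) := hfinal
  -- apply the Lambert construction
  obtain ⟨ω, hωa, hω0, hωm, hωeq⟩ := lambert_exists (fun z => p z - 1)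
    (hp.sub analyticOn_const) (by simp [hp0]) hmain
  refine ⟨ω, hωa, hω0, hωm, fun z hz => ?_⟩
  have := hωeq z hz
  simp only at this ⊢
  linear_combination -this
end
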